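/- arXiv:math/9909111 — 2 statements merged into one kernel-verified Lean document; each statement's English description precedes it below -/
import Mathlib

section
/- Let 2 < t < 4, let z_1 ≥ 0 and z_2 be a real number, and let a ≥ 0, b ≥ 0 with a^t ≤ b. If X is a symmetric random variable with EX^2 ≤ a^2 and E|X|^t ≤ b, and U is a Rademacher random variable, then E|z_1 X + z_2|^t − b z_1^t ≤ E|a z_1 U + z_2|^t − a^t z_1^t. -/
open MeasureTheory ProbabilityTheory Set Real
open scoped ENNReal NNReal

noncomputable section

namespace MomentAux

/-- real subadditivity of rpow for exponents in [0,1] -/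
lemma rpow_subadd {p x y : ℝ} (hp0 : 0 ≤ p) (hp1 : p ≤ 1) (hx : 0 ≤ x) (hy : 0 ≤ y) :
    (x + y) ^ p ≤ x ^ p + y ^ p := by
  have h := NNReal.rpow_add_le_add_rpow x.toNNReal y.toNNReal hp0 hp1
  have := (NNReal.coe_le_coe).2 h
  simpa [NNReal.coe_rpow, ← Real.toNNReal_add hx hy,
    Real.coe_toNNReal _ (by positivity : (0:ℝ) ≤ x + y), Real.coe_toNNReal _ hx,
    Real.coe_toNNReal _ hy] using this

/-- real superadditivity of rpow for exponents ≥ 1 -/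
lemma rpow_superadd {p x y : ℝ} (hp1 : 1 ≤ p) (hx : 0 ≤ x) (hy : 0 ≤ y) :
    x ^ p + y ^ p ≤ (x + y) ^ p := by
  have h := NNReal.add_rpow_le_rpow_add x.toNNReal y.toNNReal hp1
  have := (NNReal.coe_le_coe).2 h
  simpa [NNReal.coe_rpow, ← Real.toNNReal_add hx hy,
    Real.coe_toNNReal _ (by positivity : (0:ℝ) ≤ x + y), Real.coe_toNNReal _ hx,
    Real.coe_toNNReal _ hy] using this

lemma sq_rpow_half (y s : ℝ) : ((y ^ 2 : ℝ)) ^ (s / 2) = |y| ^ s := by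
  rw [← sq_abs]
  rw [← Real.rpow_natCast |y| 2, ← Real.rpow_mul (abs_nonneg y)]
  congr 1
  push_cast
  ring

lemma sq_rpow_half_nonneg {y : ℝ} (s : ℝ) (hy : 0 ≤ y) : ((y ^ 2 : ℝ)) ^ (s / 2) = y ^ s := by
  rw [sq_rpow_half, abs_of_nonneg hy]

/-- `u^(s) * u = u^(s+1)` for `u ≥ 0`, `s > 0`, `s+1 ≠ 0` -/
lemma rpow_mul_self {u s : ℝ} (hu : 0 ≤ u) (hs : 0 < s) : u ^ s * u = u ^ (s + 1) := by
  rcases eq_or_lt_of_le hu with h | h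
  · simp [← h, Real.zero_rpow hs.ne', Real.zero_rpow (show s + 1 ≠ 0 by linarith)]
  · rw [Real.rpow_add_one h.ne']


variable (t z : ℝ)

/-- the symmetrized centered function, in globally-smooth form -/
def Hh (x : ℝ) : ℝ :=
  (((x + z) ^ 2) ^ (t / 2) + ((x - z) ^ 2) ^ (t / 2)) / 2 - ((x ^ 2) ^ (t / 2))

/-- its derivative -/
def Hd (x : ℝ) : ℝ :=
  (t * ((x + z) ^ 2) ^ ((t - 2) / 2) * (x + z) + t * ((x - z) ^ 2) ^ ((t - 2) / 2) * (x - z)) / 2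
    - t * (x ^ 2) ^ ((t - 2) / 2) * x

lemma sq_piece_hasDerivAt (ht2 : 2 < t) (c x : ℝ) :
    HasDerivAt (fun x : ℝ => ((x + c) ^ 2) ^ (t / 2))
      (t * ((x + c) ^ 2) ^ ((t - 2) / 2) * (x + c)) x := by
  have h1 : HasDerivAt (fun x : ℝ => (x + c) ^ 2) (2 * (x + c)) x := by
    simpa using ((hasDerivAt_id x).add_const c).fun_pow 2
  have h2 := h1.rpow_const (p := t / 2) (Or.inr (by linarith))
  convert h2 using 1
  rw [show t / 2 - 1 = (t - 2) / 2 by ring]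
  ring

lemma Hh_hasDerivAt (ht2 : 2 < t) (x : ℝ) : HasDerivAt (Hh t z) (Hd t z x) x := by
  have hp := sq_piece_hasDerivAt t ht2 z x
  have hm : HasDerivAt (fun x : ℝ => ((x - z) ^ 2) ^ (t / 2))
      (t * ((x - z) ^ 2) ^ ((t - 2) / 2) * (x - z)) x := by
    simpa [sub_eq_add_neg] using sq_piece_hasDerivAt t ht2 (-z) x
  have h0 : HasDerivAt (fun x : ℝ => (x ^ 2) ^ (t / 2))
      (t * (x ^ 2) ^ ((t - 2) / 2) * x) x := by
    simpa using sq_piece_hasDerivAt t ht2 0 x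
  exact ((hp.fun_add hm).div_const 2).fun_sub h0

lemma Hh_cont (ht2 : 2 < t) : Continuous (Hh t z) := by
  have : Differentiable ℝ (Hh t z) := fun x => (Hh_hasDerivAt t z ht2 x).differentiableAt
  exact this.continuous

/-- value of Hh on nonnegative reals, in rpow form -/
lemma Hh_eq (hz : 0 ≤ z) {x : ℝ} (hx : 0 ≤ x) :
    Hh t z x = ((x + z) ^ t + |x - z| ^ t) / 2 - x ^ t := by
  unfold Hh
  rw [sq_rpow_half, sq_rpow_half, sq_rpow_half, abs_of_nonneg (by linarith), abs_of_nonneg hx]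


/-- S1: subadditivity-type bound, r ∈ (-1,1), 0 < x < z -/
lemma S1 {r x z : ℝ} (hr1 : -1 < r) (hr2 : r < 1) (hx : 0 < x) (hxz : x < z) :
    (x + z) ^ r ≤ 2 * x ^ r + (z - x) ^ r := by
  rcases le_or_gt r 0 with hr | hr
  · have h1 : (x + z) ^ r ≤ x ^ r := Real.rpow_le_rpow_of_nonpos hx (by linarith) hr
    have h2 : (0:ℝ) ≤ x ^ r := Real.rpow_nonneg hx.le r
    have h3 : (0:ℝ) ≤ (z - x) ^ r := Real.rpow_nonneg (by linarith) r
    linarith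
  · have h1 : (x + z) ^ r ≤ x ^ r + z ^ r :=
      rpow_subadd hr.le hr2.le hx.le (by linarith)
    have h2 : z ^ r ≤ x ^ r + (z - x) ^ r := by
      have := rpow_subadd hr.le hr2.le hx.le (show (0:ℝ) ≤ z - x by linarith)
      simpa [show x + (z - x) = z by ring] using this
    linarith

/-- S2: trapezoid-type bound, 0 < v ≤ u, 0 < q < 2 -/
lemma S2 {q u v : ℝ} (hq0 : 0 < q) (hq2 : q < 2) (hv : 0 < v) (hvu : v ≤ u) :
    q * ((u + v) / 2) * (u ^ (q - 1) - v ^ (q - 1)) ≤ u ^ q - v ^ q := by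
  have hu : 0 < u := lt_of_lt_of_le hv hvu
  have huq : v ^ q ≤ u ^ q := Real.rpow_le_rpow hv.le hvu hq0.le
  rcases le_or_gt q 1 with hq | hq
  · have h1 : u ^ (q - 1) ≤ v ^ (q - 1) := by
      rcases eq_or_lt_of_le hq with h | h
      · subst h; simp
      · exact Real.rpow_le_rpow_of_nonpos hv hvu (by linarith)
    have h2 : q * ((u + v) / 2) * (u ^ (q - 1) - v ^ (q - 1)) ≤ 0 :=
      mul_nonpos_of_nonneg_of_nonpos (by positivity) (by linarith)
    linarith
  · -- 1 < q < 2
    have key : v * u ^ (q - 1) ≤ u * v ^ (q - 1) := by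
      have h1 : u ^ (q - 2) ≤ v ^ (q - 2) :=
        Real.rpow_le_rpow_of_nonpos hv hvu (by linarith)
      have e1 : v * u ^ (q - 1) = (u * v) * u ^ (q - 2) := by
        rw [show q - 1 = (q - 2) + 1 by ring, Real.rpow_add_one hu.ne']
        ring
      have e2 : u * v ^ (q - 1) = (u * v) * v ^ (q - 2) := by
        rw [show q - 1 = (q - 2) + 1 by ring, Real.rpow_add_one hv.ne']
        ring
      rw [e1, e2]
      exact mul_le_mul_of_nonneg_left h1 (by positivity)
    have eu : u * u ^ (q - 1) = u ^ q := by
      rw [mul_comm, rpow_mul_self hu.le (by linarith)]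
      norm_num
    have ev : v * v ^ (q - 1) = v ^ q := by
      rw [mul_comm, rpow_mul_self hv.le (by linarith)]
      norm_num
    nlinarith [huq]

/-- derivative of the starA gap function -/
lemma gderivA {t z : ℝ} (ht2 : 2 < t) {x : ℝ} (hx : 0 < x) (hxz : x < z) :
    HasDerivAt (fun y : ℝ =>
      (y + z) ^ (t-1) - (z - y) ^ (t-1) - 2 * y ^ (t-1)
        - (t-1) * y * ((y + z) ^ (t-2) + (z - y) ^ (t-2) - 2 * y ^ (t-2)))
      ((t-1) * (t-2) * x * (2 * x ^ (t-3) + (z - x) ^ (t-3) - (x + z) ^ (t-3))) x := by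
  have hxz0 : (0:ℝ) < x + z := by linarith
  have hzx0 : (0:ℝ) < z - x := by linarith
  have d1 : HasDerivAt (fun y : ℝ => (y + z) ^ (t-1)) ((t-1) * (x + z) ^ (t-2)) x := by
    have := ((hasDerivAt_id x).add_const z).rpow_const (p := t-1) (Or.inl hxz0.ne')
    simpa [show t-1-1 = t-2 by ring] using this
  have d2 : HasDerivAt (fun y : ℝ => (z - y) ^ (t-1)) (-((t-1) * (z - x) ^ (t-2))) x := by
    have h := ((hasDerivAt_id x).const_sub z).rpow_const (p := t-1) (Or.inl hzx0.ne')
    simp only [id_eq] at h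
    convert h using 1
    rw [show t-1-1 = t-2 by ring]
    ring
  have d3 : HasDerivAt (fun y : ℝ => y ^ (t-1)) ((t-1) * x ^ (t-2)) x := by
    have := (hasDerivAt_id x).rpow_const (p := t-1) (Or.inl hx.ne')
    simpa [show t-1-1 = t-2 by ring] using this
  have d4 : HasDerivAt (fun y : ℝ => (y + z) ^ (t-2)) ((t-2) * (x + z) ^ (t-3)) x := by
    have := ((hasDerivAt_id x).add_const z).rpow_const (p := t-2) (Or.inl hxz0.ne')
    simpa [show t-2-1 = t-3 by ring] using this
  have d5 : HasDerivAt (fun y : ℝ => (z - y) ^ (t-2)) (-((t-2) * (z - x) ^ (t-3))) x := by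
    have h := ((hasDerivAt_id x).const_sub z).rpow_const (p := t-2) (Or.inl hzx0.ne')
    simp only [id_eq] at h
    convert h using 1
    rw [show t-2-1 = t-3 by ring]
    ring
  have d6 : HasDerivAt (fun y : ℝ => y ^ (t-2)) ((t-2) * x ^ (t-3)) x := by
    have := (hasDerivAt_id x).rpow_const (p := t-2) (Or.inl hx.ne')
    simpa [show t-2-1 = t-3 by ring] using this
  have dsum : HasDerivAt (fun y : ℝ => (y + z) ^ (t-2) + (z - y) ^ (t-2) - 2 * y ^ (t-2))
      ((t-2) * (x + z) ^ (t-3) + (-((t-2) * (z - x) ^ (t-3))) - 2 * ((t-2) * x ^ (t-3))) x :=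
    (d4.add d5).sub ((d6.const_mul 2))
  have dprod : HasDerivAt (fun y : ℝ =>
      (t-1) * y * ((y + z) ^ (t-2) + (z - y) ^ (t-2) - 2 * y ^ (t-2)))
      ((t-1) * ((x + z) ^ (t-2) + (z - x) ^ (t-2) - 2 * x ^ (t-2))
        + (t-1) * x * ((t-2) * (x + z) ^ (t-3) + (-((t-2) * (z - x) ^ (t-3)))
          - 2 * ((t-2) * x ^ (t-3)))) x := by
    have hid : HasDerivAt (fun y : ℝ => (t-1) * y) (t-1) x := by
      simpa using (hasDerivAt_id x).const_mul (t-1)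
    have := hid.fun_mul dsum
    convert this using 1 <;> ring
  have := ((d1.fun_sub d2).fun_sub (d3.const_mul 2)).fun_sub dprod
  exact this.congr_deriv (by ring)
  
/-- star A : key inequality for 0 ≤ x ≤ z -/
lemma starA {t z : ℝ} (ht2 : 2 < t) (ht4 : t < 4) (hz : 0 < z) {x : ℝ}
    (hx : 0 ≤ x) (hxz : x ≤ z) :
    (t - 1) * x * ((x + z) ^ (t - 2) + (z - x) ^ (t - 2) - 2 * x ^ (t - 2))
      ≤ (x + z) ^ (t - 1) - (z - x) ^ (t - 1) - 2 * x ^ (t - 1) := by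
  set g : ℝ → ℝ := fun y =>
    (y + z) ^ (t-1) - (z - y) ^ (t-1) - 2 * y ^ (t-1)
      - (t-1) * y * ((y + z) ^ (t-2) + (z - y) ^ (t-2) - 2 * y ^ (t-2)) with hg
  have hp0 : (0:ℝ) < t - 1 := by linarith
  have hq0 : (0:ℝ) < t - 2 := by linarith
  have hg0 : g 0 = 0 := by
    simp [hg, Real.zero_rpow hp0.ne', Real.zero_rpow hq0.ne']
  have hcont : Continuous g := by
    rw [hg]
    have c1 : Continuous fun y : ℝ => (y + z) ^ (t-1) :=
      (continuous_id.add continuous_const).rpow_const (fun x => Or.inr hp0.le)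
    have c2 : Continuous fun y : ℝ => (z - y) ^ (t-1) :=
      (continuous_const.sub continuous_id).rpow_const (fun x => Or.inr hp0.le)
    have c3 : Continuous fun y : ℝ => y ^ (t-1) :=
      continuous_id.rpow_const (fun x => Or.inr hp0.le)
    have c4 : Continuous fun y : ℝ => (y + z) ^ (t-2) :=
      (continuous_id.add continuous_const).rpow_const (fun x => Or.inr hq0.le)
    have c5 : Continuous fun y : ℝ => (z - y) ^ (t-2) :=
      (continuous_const.sub continuous_id).rpow_const (fun x => Or.inr hq0.le)
    have c6 : Continuous fun y : ℝ => y ^ (t-2) :=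
      continuous_id.rpow_const (fun x => Or.inr hq0.le)
    fun_prop
  have hmono : MonotoneOn g (Icc 0 z) := by
    apply monotoneOn_of_deriv_nonneg (convex_Icc 0 z) hcont.continuousOn
    · intro y hy
      rw [interior_Icc] at hy
      exact (gderivA ht2 hy.1 hy.2).differentiableAt.differentiableWithinAt
    · intro y hy
      rw [interior_Icc] at hy
      rw [(gderivA ht2 hy.1 hy.2).deriv]
      have hS := S1 (r := t - 3) (x := y) (z := z) (by linarith) (by linarith) hy.1 hy.2
      have : (0:ℝ) ≤ 2 * y ^ (t-3) + (z - y) ^ (t-3) - (y + z) ^ (t-3) := by linarith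
      have hy0 : (0:ℝ) < y := hy.1
      positivity
  have hfin := hmono (left_mem_Icc.mpr hz.le) ⟨hx, hxz⟩ hx
  rw [hg0] at hfin
  simp only [hg] at hfin
  linarith


/-- derivative of the starB gap function (in the variable ζ) -/
lemma gderivB {t x : ℝ} {ζ : ℝ} (hζ : 0 < ζ) (hζx : ζ < x) :
    HasDerivAt (fun w : ℝ =>
      (x + w) ^ (t-1) + (x - w) ^ (t-1) - 2 * x ^ (t-1)
        - (t-1) * x * ((x + w) ^ (t-2) + (x - w) ^ (t-2) - 2 * x ^ (t-2)))
      ((t-1) * ((x + ζ) ^ (t-2) - (x - ζ) ^ (t-2))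
        - (t-1) * x * ((t-2) * (x + ζ) ^ (t-3) - (t-2) * (x - ζ) ^ (t-3))) ζ := by
  have hu : (0:ℝ) < x + ζ := by linarith
  have hv : (0:ℝ) < x - ζ := by linarith
  have d1 : HasDerivAt (fun w : ℝ => (x + w) ^ (t-1)) ((t-1) * (x + ζ) ^ (t-2)) ζ := by
    have h := ((hasDerivAt_id ζ).const_add x).rpow_const (p := t-1) (Or.inl hu.ne')
    simp only [id_eq] at h
    convert h using 1
    rw [show t-1-1 = t-2 by ring]; ring
  have d2 : HasDerivAt (fun w : ℝ => (x - w) ^ (t-1)) (-((t-1) * (x - ζ) ^ (t-2))) ζ := by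
    have h := ((hasDerivAt_id ζ).const_sub x).rpow_const (p := t-1) (Or.inl hv.ne')
    simp only [id_eq] at h
    convert h using 1
    rw [show t-1-1 = t-2 by ring]; ring
  have d3 : HasDerivAt (fun w : ℝ => (x + w) ^ (t-2)) ((t-2) * (x + ζ) ^ (t-3)) ζ := by
    have h := ((hasDerivAt_id ζ).const_add x).rpow_const (p := t-2) (Or.inl hu.ne')
    simp only [id_eq] at h
    convert h using 1
    rw [show t-2-1 = t-3 by ring]; ring
  have d4 : HasDerivAt (fun w : ℝ => (x - w) ^ (t-2)) (-((t-2) * (x - ζ) ^ (t-3))) ζ := by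
    have h := ((hasDerivAt_id ζ).const_sub x).rpow_const (p := t-2) (Or.inl hv.ne')
    simp only [id_eq] at h
    convert h using 1
    rw [show t-2-1 = t-3 by ring]; ring
  have hsum : HasDerivAt (fun w : ℝ => (x + w) ^ (t-2) + (x - w) ^ (t-2) - 2 * x ^ (t-2))
      ((t-2) * (x + ζ) ^ (t-3) + (-((t-2) * (x - ζ) ^ (t-3)))) ζ := by
    simpa using (d3.add d4).sub_const (2 * x ^ (t-2))
  have := ((d1.fun_add d2).sub_const (2 * x ^ (t-1))).fun_sub (hsum.const_mul ((t-1) * x))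
  exact this.congr_deriv (by ring)

/-- star B : key inequality for 0 ≤ z ≤ x -/
lemma starB {t z : ℝ} (ht2 : 2 < t) (ht4 : t < 4) (hz : 0 < z) {x : ℝ} (hzx : z ≤ x) :
    (t - 1) * x * ((x + z) ^ (t - 2) + (x - z) ^ (t - 2) - 2 * x ^ (t - 2))
      ≤ (x + z) ^ (t - 1) + (x - z) ^ (t - 1) - 2 * x ^ (t - 1) := by
  have hx : (0:ℝ) < x := lt_of_lt_of_le hz hzx
  have hp0 : (0:ℝ) < t - 1 := by linarith
  have hq0 : (0:ℝ) < t - 2 := by linarith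
  set g : ℝ → ℝ := fun w =>
    (x + w) ^ (t-1) + (x - w) ^ (t-1) - 2 * x ^ (t-1)
      - (t-1) * x * ((x + w) ^ (t-2) + (x - w) ^ (t-2) - 2 * x ^ (t-2)) with hg
  have hg0 : g 0 = 0 := by simp [hg]; ring
  have hcont : Continuous g := by
    rw [hg]
    have c1 : Continuous fun w : ℝ => (x + w) ^ (t-1) :=
      (continuous_const.add continuous_id).rpow_const (fun _ => Or.inr hp0.le)
    have c2 : Continuous fun w : ℝ => (x - w) ^ (t-1) :=
      (continuous_const.sub continuous_id).rpow_const (fun _ => Or.inr hp0.le)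
    have c3 : Continuous fun w : ℝ => (x + w) ^ (t-2) :=
      (continuous_const.add continuous_id).rpow_const (fun _ => Or.inr hq0.le)
    have c4 : Continuous fun w : ℝ => (x - w) ^ (t-2) :=
      (continuous_const.sub continuous_id).rpow_const (fun _ => Or.inr hq0.le)
    fun_prop
  have hmono : MonotoneOn g (Icc 0 x) := by
    apply monotoneOn_of_deriv_nonneg (convex_Icc 0 x) hcont.continuousOn
    · intro w hw
      rw [interior_Icc] at hw
      exact (gderivB hw.1 hw.2).differentiableAt.differentiableWithinAt
    · intro w hw
      rw [interior_Icc, mem_Ioo] at hw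
      obtain ⟨hw1, hw2⟩ := hw
      rw [(gderivB hw1 hw2).deriv]
      have hS := S2 (q := t - 2) (u := x + w) (v := x - w) hq0 (by linarith)
        (by linarith) (by linarith)
      rw [show (x + w) + (x - w) = 2 * x by ring] at hS
      rw [show t - 2 - 1 = t - 3 by ring] at hS
      nlinarith [hS]
  have hfin := hmono (left_mem_Icc.mpr hx.le) ⟨hz.le, hzx⟩ hz.le
  rw [hg0] at hfin
  simp only [hg] at hfin
  linarith


lemma Hd_eq_low {t z : ℝ} (ht2 : 2 < t) (hz : 0 ≤ z) {x : ℝ} (hx : 0 ≤ x) (hxz : x ≤ z) :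
    Hd t z x = (t * (x + z) ^ (t-1) - t * (z - x) ^ (t-1)) / 2 - t * x ^ (t-1) := by
  have hq0 : (0:ℝ) < t - 2 := by linarith
  unfold Hd
  rw [sq_rpow_half (x + z) (t-2), sq_rpow_half (x - z) (t-2), sq_rpow_half x (t-2),
    abs_of_nonneg (by linarith : (0:ℝ) ≤ x + z), abs_of_nonpos (by linarith : x - z ≤ 0),
    abs_of_nonneg hx]
  have e1 : (x + z) ^ (t-2) * (x + z) = (x + z) ^ (t-1) := by
    rw [rpow_mul_self (by linarith) hq0, show t-2+1 = t-1 by ring]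
  have e2 : (z - x) ^ (t-2) * (z - x) = (z - x) ^ (t-1) := by
    rw [rpow_mul_self (by linarith) hq0, show t-2+1 = t-1 by ring]
  have e3 : x ^ (t-2) * x = x ^ (t-1) := by
    rw [rpow_mul_self hx hq0, show t-2+1 = t-1 by ring]
  rw [show -(x - z) = z - x by ring] at *
  nlinarith [e1, e2, e3]

lemma Hd_eq_high {t z : ℝ} (ht2 : 2 < t) (hz : 0 ≤ z) {x : ℝ} (hzx : z ≤ x) :
    Hd t z x = (t * (x + z) ^ (t-1) + t * (x - z) ^ (t-1)) / 2 - t * x ^ (t-1) := by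
  have hq0 : (0:ℝ) < t - 2 := by linarith
  unfold Hd
  rw [sq_rpow_half (x + z) (t-2), sq_rpow_half (x - z) (t-2), sq_rpow_half x (t-2),
    abs_of_nonneg (by linarith : (0:ℝ) ≤ x + z), abs_of_nonneg (by linarith : (0:ℝ) ≤ x - z),
    abs_of_nonneg (by linarith : (0:ℝ) ≤ x)]
  have e1 : (x + z) ^ (t-2) * (x + z) = (x + z) ^ (t-1) := by
    rw [rpow_mul_self (by linarith) hq0, show t-2+1 = t-1 by ring]
  have e2 : (x - z) ^ (t-2) * (x - z) = (x - z) ^ (t-1) := by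
    rw [rpow_mul_self (by linarith) hq0, show t-2+1 = t-1 by ring]
  have e3 : x ^ (t-2) * x = x ^ (t-1) := by
    rw [rpow_mul_self (by linarith) hq0, show t-2+1 = t-1 by ring]
  nlinarith [e1, e2, e3]

lemma two_le_two_rpow {p : ℝ} (hp : 1 ≤ p) : (2:ℝ) ≤ 2 ^ p := by
  calc (2:ℝ) = 2 ^ (1:ℝ) := by norm_num
  _ ≤ 2 ^ p := Real.rpow_le_rpow_of_exponent_le one_le_two hp

lemma Hd_nonneg {t z : ℝ} (ht2 : 2 < t) (hz : 0 ≤ z) {x : ℝ} (hx : 0 ≤ x) :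
    0 ≤ Hd t z x := by
  have hp1 : (1:ℝ) ≤ t - 1 := by linarith
  have ht0 : (0:ℝ) < t := by linarith
  rcases le_or_gt x z with hxz | hzx
  · rw [Hd_eq_low ht2 hz hx hxz]
    have hsup := rpow_superadd hp1 (show (0:ℝ) ≤ z - x by linarith) (show (0:ℝ) ≤ 2*x by linarith)
    rw [show z - x + 2*x = x + z by ring] at hsup
    have h2x : (2*x) ^ (t-1) = 2 ^ (t-1) * x ^ (t-1) := Real.mul_rpow (by norm_num) hx
    have h2 : 2 * x ^ (t-1) ≤ 2 ^ (t-1) * x ^ (t-1) :=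
      mul_le_mul_of_nonneg_right (two_le_two_rpow hp1) (Real.rpow_nonneg hx _)
    nlinarith [hsup, h2, ht0]
  · rw [Hd_eq_high ht2 hz hzx.le]
    have hc := (convexOn_rpow (p := t-1) hp1).2 (show x + z ∈ Ici (0:ℝ) by simp; linarith)
      (show x - z ∈ Ici (0:ℝ) by simp; linarith) (by norm_num : (0:ℝ) ≤ 1/2)
      (by norm_num : (0:ℝ) ≤ 1/2) (by norm_num)
    simp only [smul_eq_mul] at hc
    rw [show 1/2 * (x + z) + 1/2 * (x - z) = x by ring] at hc
    nlinarith [hc, ht0]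

lemma Hh_mono {t z : ℝ} (ht2 : 2 < t) (hz : 0 ≤ z) : MonotoneOn (Hh t z) (Ici 0) := by
  apply monotoneOn_of_deriv_nonneg (convex_Ici 0) (Hh_cont t z ht2).continuousOn
  · intro x _
    exact (Hh_hasDerivAt t z ht2 x).differentiableAt.differentiableWithinAt
  · intro x hx
    rw [interior_Ici, mem_Ioi] at hx
    rw [(Hh_hasDerivAt t z ht2 x).deriv]
    exact Hd_nonneg ht2 hz hx.le


/-- the low-region form of `Hd x / (2x)` -/
def E1 (t z x : ℝ) : ℝ := (t/4) * (((x + z) ^ (t-1) - (z - x) ^ (t-1) - 2 * x ^ (t-1)) / x)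

/-- the high-region form of `Hd x / (2x)` -/
def E2 (t z x : ℝ) : ℝ := (t/4) * (((x + z) ^ (t-1) + (x - z) ^ (t-1) - 2 * x ^ (t-1)) / x)

lemma Hd_div_eq_low {t z : ℝ} (ht2 : 2 < t) (hz : 0 ≤ z) {x : ℝ} (hx : 0 < x) (hxz : x ≤ z) :
    Hd t z x / (2 * x) = E1 t z x := by
  rw [Hd_eq_low ht2 hz hx.le hxz]
  unfold E1
  field_simp
  ring

lemma Hd_div_eq_high {t z : ℝ} (ht2 : 2 < t) (hz : 0 ≤ z) {x : ℝ} (hx : 0 < x) (hzx : z ≤ x) :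
    Hd t z x / (2 * x) = E2 t z x := by
  rw [Hd_eq_high ht2 hz hzx]
  unfold E2
  field_simp
  ring

lemma E1_hasDerivAt {t z : ℝ} (ht2 : 2 < t) {x : ℝ} (hx : 0 < x) (hxz : x < z) :
    HasDerivAt (E1 t z)
      ((t/4) * ((((t-1) * (x + z) ^ (t-2) + (t-1) * (z - x) ^ (t-2) - 2 * ((t-1) * x ^ (t-2))) * x
        - ((x + z) ^ (t-1) - (z - x) ^ (t-1) - 2 * x ^ (t-1))) / x ^ 2)) x := by
  have hxz0 : (0:ℝ) < x + z := by linarith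
  have hzx0 : (0:ℝ) < z - x := by linarith
  have d1 : HasDerivAt (fun y : ℝ => (y + z) ^ (t-1)) ((t-1) * (x + z) ^ (t-2)) x := by
    have h := ((hasDerivAt_id x).add_const z).rpow_const (p := t-1) (Or.inl hxz0.ne')
    simp only [id_eq] at h
    convert h using 1
    rw [show t-1-1 = t-2 by ring]; ring
  have d2 : HasDerivAt (fun y : ℝ => (z - y) ^ (t-1)) (-((t-1) * (z - x) ^ (t-2))) x := by
    have h := ((hasDerivAt_id x).const_sub z).rpow_const (p := t-1) (Or.inl hzx0.ne')
    simp only [id_eq] at h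
    convert h using 1
    rw [show t-1-1 = t-2 by ring]; ring
  have d3 : HasDerivAt (fun y : ℝ => y ^ (t-1)) ((t-1) * x ^ (t-2)) x := by
    have h := (hasDerivAt_id x).rpow_const (p := t-1) (Or.inl hx.ne')
    simp only [id_eq] at h
    convert h using 1
    rw [show t-1-1 = t-2 by ring]; ring
  have dnum : HasDerivAt (fun y : ℝ => (y + z) ^ (t-1) - (z - y) ^ (t-1) - 2 * y ^ (t-1))
      ((t-1) * (x + z) ^ (t-2) + (t-1) * (z - x) ^ (t-2) - 2 * ((t-1) * x ^ (t-2))) x := by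
    have := (d1.fun_sub d2).fun_sub (d3.const_mul 2)
    exact this.congr_deriv (by ring)
  have hdiv := dnum.fun_div (hasDerivAt_id x) hx.ne'
  have := hdiv.const_mul (t/4)
  refine this.congr_deriv ?_
  simp only [id_eq]
  ring_nf

lemma E2_hasDerivAt {t z : ℝ} (ht2 : 2 < t) {x : ℝ} (hx : 0 < x) (hzx : z < x) (hz : 0 ≤ z) :
    HasDerivAt (E2 t z)
      ((t/4) * ((((t-1) * (x + z) ^ (t-2) + (t-1) * (x - z) ^ (t-2) - 2 * ((t-1) * x ^ (t-2))) * x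
        - ((x + z) ^ (t-1) + (x - z) ^ (t-1) - 2 * x ^ (t-1))) / x ^ 2)) x := by
  have hxz0 : (0:ℝ) < x + z := by linarith
  have hzx0 : (0:ℝ) < x - z := by linarith
  have d1 : HasDerivAt (fun y : ℝ => (y + z) ^ (t-1)) ((t-1) * (x + z) ^ (t-2)) x := by
    have h := ((hasDerivAt_id x).add_const z).rpow_const (p := t-1) (Or.inl hxz0.ne')
    simp only [id_eq] at h
    convert h using 1
    rw [show t-1-1 = t-2 by ring]; ring
  have d2 : HasDerivAt (fun y : ℝ => (y - z) ^ (t-1)) ((t-1) * (x - z) ^ (t-2)) x := by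
    have h := ((hasDerivAt_id x).sub_const z).rpow_const (p := t-1) (Or.inl hzx0.ne')
    simp only [id_eq] at h
    convert h using 1
    rw [show t-1-1 = t-2 by ring]; ring
  have d3 : HasDerivAt (fun y : ℝ => y ^ (t-1)) ((t-1) * x ^ (t-2)) x := by
    have h := (hasDerivAt_id x).rpow_const (p := t-1) (Or.inl hx.ne')
    simp only [id_eq] at h
    convert h using 1
    rw [show t-1-1 = t-2 by ring]; ring
  have dnum : HasDerivAt (fun y : ℝ => (y + z) ^ (t-1) + (y - z) ^ (t-1) - 2 * y ^ (t-1))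
      ((t-1) * (x + z) ^ (t-2) + (t-1) * (x - z) ^ (t-2) - 2 * ((t-1) * x ^ (t-2))) x := by
    have := (d1.fun_add d2).fun_sub (d3.const_mul 2)
    exact this.congr_deriv (by ring)
  have hdiv := dnum.fun_div (hasDerivAt_id x) hx.ne'
  have := hdiv.const_mul (t/4)
  refine this.congr_deriv ?_
  simp only [id_eq]
  ring_nf

lemma E1_antitone {t z : ℝ} (ht2 : 2 < t) (ht4 : t < 4) (hz : 0 < z) :
    AntitoneOn (E1 t z) (Ioc 0 z) := by
  have hp0 : (0:ℝ) < t - 1 := by linarith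
  apply antitoneOn_of_deriv_nonpos (convex_Ioc 0 z)
  · apply ContinuousOn.mul continuousOn_const
    apply ContinuousOn.div
    · apply Continuous.continuousOn
      have c1 : Continuous fun y : ℝ => (y + z) ^ (t-1) :=
        (continuous_id.add continuous_const).rpow_const (fun _ => Or.inr hp0.le)
      have c2 : Continuous fun y : ℝ => (z - y) ^ (t-1) :=
        (continuous_const.sub continuous_id).rpow_const (fun _ => Or.inr hp0.le)
      have c3 : Continuous fun y : ℝ => y ^ (t-1) :=
        continuous_id.rpow_const (fun _ => Or.inr hp0.le)
      fun_prop
    · exact continuousOn_id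
    · intro y hy
      exact ne_of_gt hy.1
  · intro y hy
    rw [interior_Ioc] at hy
    exact (E1_hasDerivAt ht2 hy.1 hy.2).differentiableAt.differentiableWithinAt
  · intro y hy
    rw [interior_Ioc, mem_Ioo] at hy
    obtain ⟨hy1, hy2⟩ := hy
    rw [(E1_hasDerivAt ht2 hy1 hy2).deriv]
    have hstar := starA ht2 ht4 hz hy1.le hy2.le
    have hnum : ((t-1) * (y + z) ^ (t-2) + (t-1) * (z - y) ^ (t-2) - 2 * ((t-1) * y ^ (t-2))) * y
        - ((y + z) ^ (t-1) - (z - y) ^ (t-1) - 2 * y ^ (t-1)) ≤ 0 := by nlinarith [hstar]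
    have ht0 : (0:ℝ) < t := by linarith
    have h2 : (0:ℝ) < y ^ 2 := by positivity
    apply mul_nonpos_of_nonneg_of_nonpos (by positivity)
    exact div_nonpos_of_nonpos_of_nonneg hnum (by positivity)

lemma E2_antitone {t z : ℝ} (ht2 : 2 < t) (ht4 : t < 4) (hz : 0 < z) :
    AntitoneOn (E2 t z) (Ici z) := by
  have hp0 : (0:ℝ) < t - 1 := by linarith
  apply antitoneOn_of_deriv_nonpos (convex_Ici z)
  · apply ContinuousOn.mul continuousOn_const
    apply ContinuousOn.div
    · apply Continuous.continuousOn
      have c1 : Continuous fun y : ℝ => (y + z) ^ (t-1) :=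
        (continuous_id.add continuous_const).rpow_const (fun _ => Or.inr hp0.le)
      have c2 : Continuous fun y : ℝ => (y - z) ^ (t-1) :=
        (continuous_id.sub continuous_const).rpow_const (fun _ => Or.inr hp0.le)
      have c3 : Continuous fun y : ℝ => y ^ (t-1) :=
        continuous_id.rpow_const (fun _ => Or.inr hp0.le)
      fun_prop
    · exact continuousOn_id
    · intro y hy
      rw [mem_Ici] at hy
      exact ne_of_gt (lt_of_lt_of_le hz hy)
  · intro y hy
    rw [interior_Ici, mem_Ioi] at hy
    exact (E2_hasDerivAt ht2 (lt_trans hz hy) hy hz.le).differentiableAt.differentiableWithinAt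
  · intro y hy
    rw [interior_Ici, mem_Ioi] at hy
    have hy0 : (0:ℝ) < y := lt_trans hz hy
    rw [(E2_hasDerivAt ht2 hy0 hy hz.le).deriv]
    have hstar := starB ht2 ht4 hz hy.le
    have hnum : ((t-1) * (y + z) ^ (t-2) + (t-1) * (y - z) ^ (t-2) - 2 * ((t-1) * y ^ (t-2))) * y
        - ((y + z) ^ (t-1) + (y - z) ^ (t-1) - 2 * y ^ (t-1)) ≤ 0 := by nlinarith [hstar]
    have ht0 : (0:ℝ) < t := by linarith
    apply mul_nonpos_of_nonneg_of_nonpos (by positivity)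
    exact div_nonpos_of_nonpos_of_nonneg hnum (by positivity)

/-- `Hd x / (2x)` is antitone on the positive reals -/
lemma Hd_div_antitone {t z : ℝ} (ht2 : 2 < t) (ht4 : t < 4) (hz : 0 < z)
    {x₁ x₂ : ℝ} (hx₁ : 0 < x₁) (h12 : x₁ ≤ x₂) :
    Hd t z x₂ / (2 * x₂) ≤ Hd t z x₁ / (2 * x₁) := by
  have hx₂ : (0:ℝ) < x₂ := lt_of_lt_of_le hx₁ h12
  rcases le_or_gt x₂ z with h2z | hz2
  · rw [Hd_div_eq_low ht2 hz.le hx₁ (le_trans h12 h2z), Hd_div_eq_low ht2 hz.le hx₂ h2z]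
    exact E1_antitone ht2 ht4 hz ⟨hx₁, le_trans h12 h2z⟩ ⟨hx₂, h2z⟩ h12
  · rcases le_or_gt z x₁ with hz1 | h1z
    · rw [Hd_div_eq_high ht2 hz.le hx₁ hz1, Hd_div_eq_high ht2 hz.le hx₂ (le_trans hz1 h12)]
      exact E2_antitone ht2 ht4 hz hz1 (le_trans hz1 h12) h12
    · have hA : Hd t z z / (2 * z) ≤ Hd t z x₁ / (2 * x₁) := by
        rw [Hd_div_eq_low ht2 hz.le hx₁ h1z.le, Hd_div_eq_low ht2 hz.le hz le_rfl]
        exact E1_antitone ht2 ht4 hz ⟨hx₁, h1z.le⟩ ⟨hz, le_rfl⟩ h1z.le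
      have hB : Hd t z x₂ / (2 * x₂) ≤ Hd t z z / (2 * z) := by
        rw [Hd_div_eq_high ht2 hz.le hz le_rfl, Hd_div_eq_high ht2 hz.le hx₂ hz2.le]
        exact E2_antitone ht2 ht4 hz (mem_Ici.mpr le_rfl) hz2.le hz2.le
      linarith


/-- the function whose concavity is the heart of the matter -/
def Phi (t z s : ℝ) : ℝ := Hh t z (Real.sqrt s)

lemma Phi_hasDerivAt {t z : ℝ} (ht2 : 2 < t) {s : ℝ} (hs : 0 < s) :
    HasDerivAt (Phi t z) (Hd t z (Real.sqrt s) / (2 * Real.sqrt s)) s := by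
  have h1 := (Hh_hasDerivAt t z ht2 (Real.sqrt s)).comp s (Real.hasDerivAt_sqrt hs.ne')
  have : Hd t z (Real.sqrt s) * (1 / (2 * Real.sqrt s))
      = Hd t z (Real.sqrt s) / (2 * Real.sqrt s) := by ring
  rw [← this]
  exact h1

lemma Phi_cont {t z : ℝ} (ht2 : 2 < t) : Continuous (Phi t z) :=
  (Hh_cont t z ht2).comp Real.continuous_sqrt

lemma Phi_concave {t z : ℝ} (ht2 : 2 < t) (ht4 : t < 4) (hz : 0 < z) :
    ConcaveOn ℝ (Ici 0) (Phi t z) := by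
  apply AntitoneOn.concaveOn_of_deriv (convex_Ici 0) (Phi_cont ht2).continuousOn
  · intro s hs
    rw [interior_Ici, mem_Ioi] at hs
    exact (Phi_hasDerivAt ht2 hs).differentiableAt.differentiableWithinAt
  · intro s₁ h₁ s₂ h₂ h12
    rw [interior_Ici, mem_Ioi] at h₁ h₂
    rw [(Phi_hasDerivAt ht2 h₁).deriv, (Phi_hasDerivAt ht2 h₂).deriv]
    exact Hd_div_antitone ht2 ht4 hz (Real.sqrt_pos.mpr h₁) (Real.sqrt_le_sqrt h12)

lemma Phi_mono {t z : ℝ} (ht2 : 2 < t) (hz : 0 ≤ z) {s₁ s₂ : ℝ} (h₁ : 0 ≤ s₁) (h12 : s₁ ≤ s₂) :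
    Phi t z s₁ ≤ Phi t z s₂ :=
  Hh_mono ht2 hz (mem_Ici.mpr (Real.sqrt_nonneg _)) (mem_Ici.mpr (Real.sqrt_nonneg _))
    (Real.sqrt_le_sqrt h12)

/-- Phi at a perfect square computes the symmetrized moment gap -/
lemma Phi_sq {t z : ℝ} (hz : 0 ≤ z) {y : ℝ} (hy : 0 ≤ y) :
    Phi t z (y ^ 2) = ((y + z) ^ t + |y - z| ^ t) / 2 - y ^ t := by
  unfold Phi
  rw [Real.sqrt_sq hy, Hh_eq t z hz hy]


/-- integral of a function of a Rademacher variable -/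
lemma rademacher_integral {Ω' : Type*} [MeasurableSpace Ω'] (μ' : Measure Ω')
    [IsProbabilityMeasure μ'] (U : Ω' → ℝ) (hU : Measurable U)
    (h1 : μ' {ω | U ω = 1} = 1 / 2) (h2 : μ' {ω | U ω = -1} = 1 / 2) (f : ℝ → ℝ) :
    ∫ ω, f (U ω) ∂μ' = (f 1 + f (-1)) / 2 := by
  set A : Set Ω' := {ω | U ω = 1} with hA
  set B : Set Ω' := {ω | U ω = -1} with hB
  have hAm : MeasurableSet A := hU (measurableSet_singleton 1)
  have hBm : MeasurableSet B := hU (measurableSet_singleton (-1))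
  have hdisj : Disjoint A B := by
    rw [Set.disjoint_left]
    intro ω hωA hωB
    rw [hA, mem_setOf_eq] at hωA
    rw [hB, mem_setOf_eq] at hωB
    rw [hωA] at hωB
    norm_num at hωB
  have hun : μ' (A ∪ B) = 1 := by
    rw [measure_union hdisj hBm, h1, h2]
    exact ENNReal.add_halves 1
  have hcompl : μ' ((A ∪ B)ᶜ) = 0 := by
    rw [measure_compl (hAm.union hBm) (measure_ne_top _ _), hun, measure_univ, tsub_self]
  have hae : ∀ᵐ ω ∂μ', ω ∈ A ∪ B := by
    rw [ae_iff]
    simpa [Set.compl_def] using hcompl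
  have heq : (fun ω => f (U ω)) =ᵐ[μ']
      fun ω => A.indicator (fun _ => f 1) ω + B.indicator (fun _ => f (-1)) ω := by
    filter_upwards [hae] with ω hω
    rcases hω with hω | hω
    · have hUω : U ω = 1 := hω
      have hωB : ω ∉ B := by
        rw [hB, mem_setOf_eq, hUω]
        norm_num
      rw [Set.indicator_of_mem hω, Set.indicator_of_notMem hωB, hUω, add_zero]
    · have hUω : U ω = -1 := hω
      have hωA : ω ∉ A := by
        rw [hA, mem_setOf_eq, hUω]
        norm_num
      rw [Set.indicator_of_mem hω, Set.indicator_of_notMem hωA, hUω, zero_add]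
  rw [integral_congr_ae heq, integral_add ((integrable_const (f 1)).indicator hAm)
    ((integrable_const (f (-1))).indicator hBm), integral_indicator_const _ hAm,
    integral_indicator_const _ hBm, measureReal_def, measureReal_def, h1, h2]
  have : ((1:ℝ≥0∞) / 2).toReal = 1/2 := by
    rw [ENNReal.toReal_div]
    norm_num
  rw [this]
  simp only [smul_eq_mul]
  ring

/-- elementary bound used for integrability -/
lemma bound_rpow {a b t : ℝ} (ha : 0 ≤ a) (hb : 0 ≤ b) (ht : 0 < t) :
    (a + b) ^ t ≤ 2 ^ t * (a ^ t + b ^ t) := by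
  have h1 : a + b ≤ 2 * max a b := by
    rcases max_cases a b with ⟨h, h'⟩ | ⟨h, h'⟩ <;> rw [h] <;> linarith
  have h2 : (a + b) ^ t ≤ (2 * max a b) ^ t :=
    Real.rpow_le_rpow (by linarith) h1 ht.le
  have h3 : (2 * max a b) ^ t = 2 ^ t * (max a b) ^ t :=
    Real.mul_rpow (by norm_num) (le_max_of_le_left ha)
  have h4 : (max a b) ^ t ≤ a ^ t + b ^ t := by
    rcases max_cases a b with ⟨h, _⟩ | ⟨h, _⟩ <;> rw [h]
    · nlinarith [Real.rpow_nonneg hb t]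
    · nlinarith [Real.rpow_nonneg ha t]
  calc (a + b) ^ t ≤ 2 ^ t * (max a b) ^ t := by rw [← h3]; exact h2
  _ ≤ 2 ^ t * (a ^ t + b ^ t) := by
      apply mul_le_mul_of_nonneg_left h4 (by positivity)

/-- the key pointwise symmetrization identity -/
lemma abs_pair_rpow (t : ℝ) (u v : ℝ) :
    |u + v| ^ t + |u - v| ^ t = (|u| + |v|) ^ t + |(|u| - |v|)| ^ t := by
  have key : ∀ u v : ℝ, 0 ≤ u →
      |u + v| ^ t + |u - v| ^ t = (|u| + |v|) ^ t + |(|u| - |v|)| ^ t := by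
    intro u v hu
    rcases le_total 0 v with hv | hv
    · rw [abs_of_nonneg hu, abs_of_nonneg hv, abs_of_nonneg (by linarith : (0:ℝ) ≤ u + v)]
    · rw [abs_of_nonneg hu, abs_of_nonpos hv,
        show u + -v = u - v by ring, show u - -v = u + v by ring,
        abs_of_nonneg (by linarith : (0:ℝ) ≤ u - v)]
      ring
  rcases le_total 0 u with hu | hu
  · exact key u v hu
  · have h := key (-u) (-v) (by linarith)
    rw [show -u + -v = -(u + v) by ring, show -u - -v = -(u - v) by ring,
      abs_neg, abs_neg, abs_neg, abs_neg] at h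
    exact h

end MomentAux

open MomentAux in
theorem moment_ineq_symm_rademacher_two_lt_t_lt_four
    (t : ℝ) (ht2 : 2 < t) (ht4 : t < 4)
    (z₁ z₂ : ℝ) (hz₁ : 0 ≤ z₁)
    (a b : ℝ) (ha : 0 ≤ a) (hb : 0 ≤ b) (hab : a ^ t ≤ b)
    -- a symmetric random variable `X` with `E X^2 ≤ a^2` and `E|X|^t ≤ b`
    (Ω : Type) [MeasurableSpace Ω] (μ : Measure Ω) [IsProbabilityMeasure μ]
    (X : Ω → ℝ) (hXmeas : Measurable X)
    (hXsymm : μ.map X = μ.map (fun ω => -X ω))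
    (hXint : Integrable (fun ω => |X ω| ^ t) μ)
    (hX2 : ∫ ω, (X ω) ^ 2 ∂μ ≤ a ^ 2)
    (hXt : ∫ ω, |X ω| ^ t ∂μ ≤ b)
    -- a Rademacher random variable `U`
    (Ω' : Type) [MeasurableSpace Ω'] (μ' : Measure Ω') [IsProbabilityMeasure μ']
    (U : Ω' → ℝ) (hUmeas : Measurable U)
    (hU1 : μ' {ω | U ω = 1} = 1 / 2) (hU2 : μ' {ω | U ω = -1} = 1 / 2) :
    (∫ ω, |z₁ * X ω + z₂| ^ t ∂μ) - b * z₁ ^ t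
      ≤ (∫ ω, |a * z₁ * U ω + z₂| ^ t ∂μ') - a ^ t * z₁ ^ t := by
  have ht0 : (0:ℝ) < t := by linarith
  have hU_int : ∫ ω, |a * z₁ * U ω + z₂| ^ t ∂μ'
      = (|a * z₁ * 1 + z₂| ^ t + |a * z₁ * (-1) + z₂| ^ t) / 2 :=
    rademacher_integral μ' U hUmeas hU1 hU2 (fun y => |a * z₁ * y + z₂| ^ t)
  -- continuity of the basic integrand
  have cont_f : ∀ c d : ℝ, Continuous fun y : ℝ => |c * y + d| ^ t := fun c d =>
    (((continuous_const.mul continuous_id).add continuous_const).abs).rpow_const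
      (fun _ => Or.inr ht0.le)
  -- integrability of the basic integrand
  have int_cd : ∀ c d : ℝ, Integrable (fun ω => |c * X ω + d| ^ t) μ := by
    intro c d
    apply Integrable.mono'
      (((hXint.const_mul (|c| ^ t)).add (integrable_const (|d| ^ t))).const_mul (2 ^ t))
    · exact ((cont_f c d).measurable.comp hXmeas).aestronglyMeasurable
    · apply ae_of_all
      intro ω
      rw [Real.norm_eq_abs, abs_of_nonneg (Real.rpow_nonneg (abs_nonneg _) _)]
      calc |c * X ω + d| ^ t ≤ (|c * X ω| + |d|) ^ t :=
            Real.rpow_le_rpow (abs_nonneg _) (abs_add_le _ _) ht0.le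
      _ ≤ 2 ^ t * (|c * X ω| ^ t + |d| ^ t) := bound_rpow (abs_nonneg _) (abs_nonneg _) ht0
      _ = 2 ^ t * (|c| ^ t * |X ω| ^ t + |d| ^ t) := by
          rw [abs_mul, Real.mul_rpow (abs_nonneg c) (abs_nonneg _)]
  have int_sq : Integrable (fun ω => (X ω) ^ 2) μ := by
    apply Integrable.mono' ((integrable_const 1).add hXint)
    · exact (hXmeas.pow_const 2).aestronglyMeasurable
    · apply ae_of_all
      intro ω
      rw [Real.norm_eq_abs, abs_of_nonneg (sq_nonneg _)]
      simp only [Pi.add_apply]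
      rcases le_total (|X ω|) 1 with h | h
      · have h2 : (X ω) ^ 2 ≤ 1 := by
          rw [← sq_abs]
          nlinarith [abs_nonneg (X ω)]
        have := Real.rpow_nonneg (abs_nonneg (X ω)) t
        linarith
      · have h1 : (X ω) ^ 2 = |X ω| ^ ((2:ℕ):ℝ) := by
          rw [Real.rpow_natCast, sq_abs]
        have h2 : |X ω| ^ ((2:ℕ):ℝ) ≤ |X ω| ^ t :=
          Real.rpow_le_rpow_of_exponent_le h (by push_cast; linarith)
        linarith [h1, h2]
  -- symmetry of the law of X
  have hsym : ∀ f : ℝ → ℝ, Measurable f → ∫ ω, f (X ω) ∂μ = ∫ ω, f (-X ω) ∂μ := by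
    intro f hf
    rw [← integral_map hXmeas.aemeasurable hf.aestronglyMeasurable, hXsymm,
      integral_map (hXmeas.fun_neg).aemeasurable hf.aestronglyMeasurable]
  -- trivial case z₁ = 0
  rcases eq_or_lt_of_le hz₁ with hz₁0 | hz₁pos
  · rw [← hz₁0]
    simp only [zero_mul, mul_zero, zero_add, Real.zero_rpow ht0.ne', mul_zero, sub_zero]
    simp [integral_const]
  -- case z₂ = 0
  by_cases hz₂0 : z₂ = 0
  · subst hz₂0
    have e1 : ∀ ω : Ω, |z₁ * X ω + 0| ^ t = z₁ ^ t * |X ω| ^ t := by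
      intro ω
      rw [add_zero, abs_mul, Real.mul_rpow (abs_nonneg _) (abs_nonneg _), abs_of_nonneg hz₁]
    have hL : ∫ ω, |z₁ * X ω + 0| ^ t ∂μ = z₁ ^ t * ∫ ω, |X ω| ^ t ∂μ := by
      simp_rw [e1]
      exact integral_const_mul _ _
    have hz₁t : (0:ℝ) ≤ z₁ ^ t := Real.rpow_nonneg hz₁ t
    have haz : |a * z₁ * 1 + 0| ^ t = a ^ t * z₁ ^ t := by
      rw [add_zero, mul_one, abs_of_nonneg (by positivity), Real.mul_rpow ha hz₁]
    have haz' : |a * z₁ * (-1) + 0| ^ t = a ^ t * z₁ ^ t := by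
      rw [add_zero, show a * z₁ * (-1) = -(a * z₁) by ring, abs_neg,
        abs_of_nonneg (by positivity), Real.mul_rpow ha hz₁]
    rw [hL, hU_int, haz, haz']
    have h1 : z₁ ^ t * ∫ ω, |X ω| ^ t ∂μ ≤ z₁ ^ t * b := mul_le_mul_of_nonneg_left hXt hz₁t
    nlinarith [h1]
  -- case a = 0
  by_cases ha0 : a = 0
  · subst ha0
    have hX2' : ∫ ω, (X ω) ^ 2 ∂μ = 0 := by
      have h1 : (0:ℝ) ≤ ∫ ω, (X ω) ^ 2 ∂μ := integral_nonneg fun ω => sq_nonneg _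
      have h2 : (0:ℝ) ^ 2 = (0:ℝ) := by norm_num
      linarith [hX2, h2 ▸ hX2]
    have hXzero : ∀ᵐ ω ∂μ, (X ω) ^ 2 = 0 := by
      have := (integral_eq_zero_iff_of_nonneg (fun ω => sq_nonneg (X ω)) int_sq).1 hX2'
      filter_upwards [this] with ω hω
      exact hω
    have hLae : (fun ω => |z₁ * X ω + z₂| ^ t) =ᵐ[μ] fun _ => |z₂| ^ t := by
      filter_upwards [hXzero] with ω hω
      have : X ω = 0 := by
        have := sq_eq_zero_iff.mp hω
        exact this
      rw [this, mul_zero, zero_add]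
    have hL : ∫ ω, |z₁ * X ω + z₂| ^ t ∂μ = |z₂| ^ t := by
      rw [integral_congr_ae hLae]
      simp
    have hR : ∫ ω, |0 * z₁ * U ω + z₂| ^ t ∂μ' = |z₂| ^ t := by
      rw [hU_int]
      norm_num
    rw [hL, hR, Real.zero_rpow ht0.ne', zero_mul, sub_zero]
    have : (0:ℝ) ≤ b * z₁ ^ t := mul_nonneg hb (Real.rpow_nonneg hz₁ t)
    linarith
  -- main case
  have hapos : 0 < a := lt_of_le_of_ne ha (Ne.symm ha0)
  set z : ℝ := |z₂| with hzdef
  have hz : 0 < z := abs_pos.mpr hz₂0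
  -- pointwise identity giving the symmetrized gap function
  have hG : ∀ y : ℝ, (|z₁ * y + z₂| ^ t + |z₁ * y - z₂| ^ t) / 2
      = Phi t z ((z₁ * y) ^ 2) + z₁ ^ t * |y| ^ t := by
    intro y
    have e1 : Phi t z ((z₁ * y) ^ 2)
        = ((|z₁ * y| + z) ^ t + |(|z₁ * y| - z)| ^ t) / 2 - |z₁ * y| ^ t := by
      rw [← sq_abs (z₁ * y)]
      exact Phi_sq hz.le (abs_nonneg _)
    have e2 := abs_pair_rpow t (z₁ * y) z₂
    have e3 : |z₁ * y| ^ t = z₁ ^ t * |y| ^ t := by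
      rw [abs_mul, Real.mul_rpow (abs_nonneg _) (abs_nonneg _), abs_of_nonneg hz₁]
    rw [e1, hzdef]
    linarith [e2, e3]
  -- step 1 : symmetrize the integral
  have int2' : Integrable (fun ω => |z₁ * X ω - z₂| ^ t) μ := by
    have := int_cd z₁ (-z₂)
    simpa [sub_eq_add_neg] using this
  have hstep1 : ∫ ω, |z₁ * X ω + z₂| ^ t ∂μ
      = ∫ ω, (|z₁ * X ω + z₂| ^ t + |z₁ * X ω - z₂| ^ t) / 2 ∂μ := by
    have hs := hsym (fun y => |z₁ * y + z₂| ^ t) (cont_f z₁ z₂).measurable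
    have e : ∀ ω : Ω, |z₁ * (-X ω) + z₂| ^ t = |z₁ * X ω - z₂| ^ t := by
      intro ω
      rw [show z₁ * (-X ω) + z₂ = -(z₁ * X ω - z₂) by ring, abs_neg]
    simp_rw [e] at hs
    rw [integral_div]
    rw [integral_add (int_cd z₁ z₂) int2']
    rw [← hs]
    ring
  -- step 2 : rewrite with Phi
  have intPhi : Integrable (fun ω => Phi t z ((z₁ * X ω) ^ 2)) μ := by
    have heq : (fun ω => Phi t z ((z₁ * X ω) ^ 2))
        = fun ω => (|z₁ * X ω + z₂| ^ t + |z₁ * X ω - z₂| ^ t) / 2 - z₁ ^ t * |X ω| ^ t := by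
      funext ω
      rw [hG (X ω)]
      ring
    rw [heq]
    exact (((int_cd z₁ z₂).add int2').div_const 2).sub (hXint.const_mul _)
  have hstep2 : ∫ ω, (|z₁ * X ω + z₂| ^ t + |z₁ * X ω - z₂| ^ t) / 2 ∂μ
      = (∫ ω, Phi t z ((z₁ * X ω) ^ 2) ∂μ) + z₁ ^ t * ∫ ω, |X ω| ^ t ∂μ := by
    have : ∀ ω : Ω, (|z₁ * X ω + z₂| ^ t + |z₁ * X ω - z₂| ^ t) / 2
        = Phi t z ((z₁ * X ω) ^ 2) + z₁ ^ t * |X ω| ^ t := fun ω => hG (X ω)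
    simp_rw [this]
    rw [integral_add intPhi (hXint.const_mul _), integral_const_mul]
  -- step 3 : Jensen
  have intY : Integrable (fun ω => (z₁ * X ω) ^ 2) μ := by
    have heq : (fun ω => (z₁ * X ω) ^ 2) = fun ω => z₁ ^ 2 * (X ω) ^ 2 := by
      funext ω; ring
    rw [heq]
    exact int_sq.const_mul _
  have hjen : ∫ ω, Phi t z ((z₁ * X ω) ^ 2) ∂μ ≤ Phi t z (∫ ω, (z₁ * X ω) ^ 2 ∂μ) := by
    have h := (Phi_concave ht2 ht4 hz).le_map_average (Phi_cont ht2).continuousOn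
      isClosed_Ici (ae_of_all μ fun ω => mem_Ici.mpr (sq_nonneg (z₁ * X ω))) intY intPhi
    rwa [average_eq_integral, average_eq_integral] at h
  -- step 4 : monotonicity
  have hmono : Phi t z (∫ ω, (z₁ * X ω) ^ 2 ∂μ) ≤ Phi t z ((z₁ * a) ^ 2) := by
    apply Phi_mono ht2 hz.le (integral_nonneg fun ω => sq_nonneg _)
    have e : ∀ ω : Ω, (z₁ * X ω) ^ 2 = z₁ ^ 2 * (X ω) ^ 2 := fun ω => by ring
    simp_rw [e]
    rw [integral_const_mul]
    calc z₁ ^ 2 * ∫ ω, (X ω) ^ 2 ∂μ ≤ z₁ ^ 2 * a ^ 2 :=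
          mul_le_mul_of_nonneg_left hX2 (sq_nonneg z₁)
    _ = (z₁ * a) ^ 2 := by ring
  -- step 5 : the Rademacher side
  have hR : ∫ ω, |a * z₁ * U ω + z₂| ^ t ∂μ' = Phi t z ((z₁ * a) ^ 2) + z₁ ^ t * a ^ t := by
    rw [hU_int]
    have e1 : a * z₁ * 1 + z₂ = z₁ * a + z₂ := by ring
    have e2 : |a * z₁ * (-1) + z₂| = |z₁ * a - z₂| := by
      rw [show a * z₁ * (-1) + z₂ = -(z₁ * a - z₂) by ring, abs_neg]
    rw [e1, e2]
    have := hG a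
    rw [abs_of_nonneg ha] at this
    exact this
  -- put everything together
  rw [hstep1, hstep2, hR]
  have hfin1 : z₁ ^ t * ∫ ω, |X ω| ^ t ∂μ ≤ z₁ ^ t * b :=
    mul_le_mul_of_nonneg_left hXt (Real.rpow_nonneg hz₁ t)
  have hfin2 : a ^ t * z₁ ^ t = z₁ ^ t * a ^ t := by ring
  linarith [hjen, hmono]
end
end

section
/- Let t ≥ 4, let z_1 ≥ 0 and z_2 be a real number, and let a ≥ 0, b ≥ 0 with a^t ≤ b. If X is a symmetric random variable with EX^2 = a^2 and E|X|^t = b, and U is a Rademacher random variable, then E|z_1 X + z_2|^t − b z_1^t ≥ E|a z_1 U + z_2|^t − a^t z_1^t. -/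
open MeasureTheory ProbabilityTheory

noncomputable section

open Set

/-- superadditivity of rpow for exponent ≥ 1 -/
lemma my_rpow_superadd {a b p : ℝ} (ha : 0 ≤ a) (hb : 0 ≤ b) (hp : 1 ≤ p) :
    a ^ p + b ^ p ≤ (a + b) ^ p := by
  have key : ∀ x y : ℝ, 0 ≤ x → 0 ≤ y → x ^ p ≤ x * (x + y) ^ (p - 1) := by
    intro x y hx hy
    rcases eq_or_lt_of_le hx with h | h
    · rw [← h, Real.zero_rpow (by linarith), zero_mul]
    · have : x ^ p = x * x ^ (p - 1) := by
        nth_rewrite 1 [show p = 1 + (p - 1) by ring]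
        rw [Real.rpow_add h, Real.rpow_one]
      rw [this]
      exact mul_le_mul_of_nonneg_left
        (Real.rpow_le_rpow hx (by linarith) (by linarith)) hx
  have h1 := key a b ha hb
  have h2 := key b a hb ha
  rw [add_comm b a] at h2
  have : a * (a + b) ^ (p - 1) + b * (a + b) ^ (p - 1) = (a + b) ^ p := by
    have : (a + b) ^ p = (a + b) * (a + b) ^ (p - 1) := by
      nth_rewrite 1 [show p = 1 + (p - 1) by ring]
      rcases eq_or_lt_of_le (add_nonneg ha hb) with h | h
      · rw [← h]
        rw [Real.zero_rpow (by linarith), zero_mul]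
      · rw [Real.rpow_add h, Real.rpow_one]
    rw [this]; ring
  linarith

lemma my_sup1 {e x : ℝ} (he : 1 ≤ e) (hx0 : 0 ≤ x) (hx1 : x ≤ 1) :
    (1 - x) ^ e + 2 * x ^ e ≤ (1 + x) ^ e := by
  have h2 : (2 : ℝ) * x ^ e ≤ (2 * x) ^ e := by
    rw [Real.mul_rpow (by norm_num) hx0]
    have : (2:ℝ) = (2:ℝ) ^ (1:ℝ) := (Real.rpow_one 2).symm
    nth_rewrite 1 [this]
    exact mul_le_mul_of_nonneg_right
      (Real.rpow_le_rpow_of_exponent_le one_le_two he) (Real.rpow_nonneg hx0 e)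
  have h3 : (1 - x) ^ e + (2 * x) ^ e ≤ ((1 - x) + 2 * x) ^ e :=
    my_rpow_superadd (by linarith) (by linarith) he
  have h4 : (1 - x) + 2 * x = 1 + x := by ring
  rw [h4] at h3
  linarith

lemma my_sup2 {e x : ℝ} (he : 1 ≤ e) (hx : 1 ≤ x) :
    2 * x ^ e ≤ (x - 1) ^ e + (x + 1) ^ e := by
  have hc := (convexOn_rpow he).2 (show x - 1 ∈ Ici (0:ℝ) by simp; linarith)
    (show x + 1 ∈ Ici (0:ℝ) by simp; linarith) (by norm_num : (0:ℝ) ≤ 1/2)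
    (by norm_num : (0:ℝ) ≤ 1/2) (by norm_num)
  simp only [smul_eq_mul] at hc
  have h1 : (1:ℝ)/2 * (x - 1) + 1/2 * (x + 1) = x := by ring
  rw [h1] at hc
  linarith

/-- derivative of the B function on (0,1) -/
lemma my_B_hasDeriv {r x : ℝ} (hr : 2 ≤ r) (hx0 : 0 < x) :
    HasDerivAt (fun x : ℝ => (1 + x) ^ r * (r * x - 1) + (1 - x) ^ r * (r * x + 1)
      - 2 * r * x ^ (r + 1))
      (1 * r * (1 + x) ^ (r - 1) * (r * x - 1) + (1 + x) ^ r * r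
        + ((-1) * r * (1 - x) ^ (r - 1) * (r * x + 1) + (1 - x) ^ r * r)
        - 2 * r * ((r + 1) * x ^ (r + 1 - 1))) x := by
  have h1 : HasDerivAt (fun x : ℝ => 1 + x) 1 x := by
    simpa using (hasDerivAt_id x).const_add 1
  have h2 : HasDerivAt (fun x : ℝ => (1 + x) ^ r) (1 * r * (1 + x) ^ (r - 1)) x :=
    h1.rpow_const (Or.inr (by linarith))
  have h3 : HasDerivAt (fun x : ℝ => r * x - 1) r x := by
    simpa using ((hasDerivAt_id x).const_mul r).sub_const 1
  have h4 : HasDerivAt (fun x : ℝ => 1 - x) (-1) x := by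
    simpa using (hasDerivAt_id x).const_sub 1
  have h5 : HasDerivAt (fun x : ℝ => (1 - x) ^ r) ((-1) * r * (1 - x) ^ (r - 1)) x :=
    h4.rpow_const (Or.inr (by linarith))
  have h6 : HasDerivAt (fun x : ℝ => r * x + 1) r x := by
    simpa using ((hasDerivAt_id x).const_mul r).add_const 1
  have h7 : HasDerivAt (fun x : ℝ => x ^ (r + 1)) ((r + 1) * x ^ (r + 1 - 1)) x :=
    Real.hasDerivAt_rpow_const (Or.inl hx0.ne')
  exact ((h2.mul h3).add (h5.mul h6)).sub ((h7.const_mul (2 * r)))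

lemma my_B_nonneg {r x : ℝ} (hr : 2 ≤ r) (hx0 : 0 ≤ x) (hx1 : x ≤ 1) :
    0 ≤ (1 + x) ^ r * (r * x - 1) + (1 - x) ^ r * (r * x + 1) - 2 * r * x ^ (r + 1) := by
  set B : ℝ → ℝ := fun x => (1 + x) ^ r * (r * x - 1) + (1 - x) ^ r * (r * x + 1)
      - 2 * r * x ^ (r + 1) with hB
  have hcont : ContinuousOn B (Icc 0 1) := by
    apply Continuous.continuousOn
    have c1 : Continuous fun x : ℝ => (1 + x) ^ r :=
      (continuous_const.add continuous_id).rpow_const (fun x => Or.inr (by linarith))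
    have c2 : Continuous fun x : ℝ => (1 - x) ^ r :=
      (continuous_const.sub continuous_id).rpow_const (fun x => Or.inr (by linarith))
    have c3 : Continuous fun x : ℝ => x ^ (r + 1) :=
      continuous_id.rpow_const (fun x => Or.inr (by linarith))
    fun_prop
  have hmono : MonotoneOn B (Icc 0 1) := by
    apply monotoneOn_of_deriv_nonneg (convex_Icc 0 1) hcont
    · rw [interior_Icc]
      intro y hy
      exact (my_B_hasDeriv hr hy.1).differentiableAt.differentiableWithinAt
    · rw [interior_Icc]
      intro y hy
      rw [(my_B_hasDeriv hr hy.1).deriv]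
      have hy0 : 0 < y := hy.1
      have hy1 : y < 1 := hy.2
      have e1 : (1 + y) ^ r = (1 + y) ^ (r - 1) * (1 + y) := by
        nth_rewrite 1 [show r = (r - 1) + 1 by ring]
        rw [Real.rpow_add_one (by linarith) (r - 1)]
      have e2 : (1 - y) ^ r = (1 - y) ^ (r - 1) * (1 - y) := by
        nth_rewrite 1 [show r = (r - 1) + 1 by ring]
        rw [Real.rpow_add_one (by linarith) (r - 1)]
      have e3 : y ^ (r + 1 - 1) = y ^ (r - 1) * y := by
        rw [show r + 1 - 1 = (r - 1) + 1 by ring]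
        rw [Real.rpow_add_one hy0.ne' (r - 1)]
      rw [e1, e2, e3]
      have key : (1 - y) ^ (r - 1) + 2 * y ^ (r - 1) ≤ (1 + y) ^ (r - 1) :=
        my_sup1 (by linarith) hy0.le hy1.le
      have heq : 1 * r * (1 + y) ^ (r - 1) * (r * y - 1) + (1 + y) ^ (r - 1) * (1 + y) * r +
          (-1 * r * (1 - y) ^ (r - 1) * (r * y + 1) + (1 - y) ^ (r - 1) * (1 - y) * r) -
          2 * r * ((r + 1) * (y ^ (r - 1) * y))
          = r * (r + 1) * y * ((1 + y) ^ (r - 1) - (1 - y) ^ (r - 1) - 2 * y ^ (r - 1)) := by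
        ring
      rw [heq]
      apply mul_nonneg
      · apply mul_nonneg (mul_nonneg (by linarith) (by linarith)) hy0.le
      · linarith
  have hB0 : B 0 = 0 := by
    simp [hB, Real.zero_rpow (show r + 1 ≠ 0 by linarith), Real.one_rpow]
  have := hmono (show (0:ℝ) ∈ Icc (0:ℝ) 1 by norm_num) (show x ∈ Icc (0:ℝ) 1 by exact ⟨hx0, hx1⟩) hx0
  rw [hB0] at this
  exact this

lemma my_A_hasDeriv {r x : ℝ} (hr : 2 ≤ r) (hx0 : 0 < x) :
    HasDerivAt (fun x : ℝ => (x + 1) ^ r * (r * x - 1) + (x - 1) ^ r * (r * x + 1)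
      - 2 * r * x ^ (r + 1))
      (1 * r * (x + 1) ^ (r - 1) * (r * x - 1) + (x + 1) ^ r * r
        + (1 * r * (x - 1) ^ (r - 1) * (r * x + 1) + (x - 1) ^ r * r)
        - 2 * r * ((r + 1) * x ^ (r + 1 - 1))) x := by
  have h1 : HasDerivAt (fun x : ℝ => x + 1) 1 x := by
    simpa using (hasDerivAt_id x).add_const 1
  have h2 : HasDerivAt (fun x : ℝ => (x + 1) ^ r) (1 * r * (x + 1) ^ (r - 1)) x :=
    h1.rpow_const (Or.inr (by linarith))
  have h3 : HasDerivAt (fun x : ℝ => r * x - 1) r x := by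
    simpa using ((hasDerivAt_id x).const_mul r).sub_const 1
  have h4 : HasDerivAt (fun x : ℝ => x - 1) 1 x := by
    simpa using (hasDerivAt_id x).sub_const 1
  have h5 : HasDerivAt (fun x : ℝ => (x - 1) ^ r) (1 * r * (x - 1) ^ (r - 1)) x :=
    h4.rpow_const (Or.inr (by linarith))
  have h6 : HasDerivAt (fun x : ℝ => r * x + 1) r x := by
    simpa using ((hasDerivAt_id x).const_mul r).add_const 1
  have h7 : HasDerivAt (fun x : ℝ => x ^ (r + 1)) ((r + 1) * x ^ (r + 1 - 1)) x :=
    Real.hasDerivAt_rpow_const (Or.inl hx0.ne')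
  exact ((h2.mul h3).add (h5.mul h6)).sub ((h7.const_mul (2 * r)))

lemma my_A_nonneg {r x : ℝ} (hr : 2 ≤ r) (hx : 1 ≤ x) :
    0 ≤ (x + 1) ^ r * (r * x - 1) + (x - 1) ^ r * (r * x + 1) - 2 * r * x ^ (r + 1) := by
  set A : ℝ → ℝ := fun x => (x + 1) ^ r * (r * x - 1) + (x - 1) ^ r * (r * x + 1)
      - 2 * r * x ^ (r + 1) with hA
  have hcont : ContinuousOn A (Ici 1) := by
    apply Continuous.continuousOn
    have c1 : Continuous fun x : ℝ => (x + 1) ^ r :=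
      (continuous_id.add continuous_const).rpow_const (fun x => Or.inr (by linarith))
    have c2 : Continuous fun x : ℝ => (x - 1) ^ r :=
      (continuous_id.sub continuous_const).rpow_const (fun x => Or.inr (by linarith))
    have c3 : Continuous fun x : ℝ => x ^ (r + 1) :=
      continuous_id.rpow_const (fun x => Or.inr (by linarith))
    fun_prop
  have hmono : MonotoneOn A (Ici 1) := by
    apply monotoneOn_of_deriv_nonneg (convex_Ici 1) hcont
    · rw [interior_Ici]
      intro y hy
      have hy1 : (1:ℝ) < y := hy
      exact (my_A_hasDeriv hr (by linarith)).differentiableAt.differentiableWithinAt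
    · rw [interior_Ici]
      intro y hy
      have hy1 : (1:ℝ) < y := hy
      have hy0 : (0:ℝ) < y := by linarith
      rw [(my_A_hasDeriv hr hy0).deriv]
      have e1 : (y + 1) ^ r = (y + 1) ^ (r - 1) * (y + 1) := by
        nth_rewrite 1 [show r = (r - 1) + 1 by ring]
        rw [Real.rpow_add_one (by linarith) (r - 1)]
      have e2 : (y - 1) ^ r = (y - 1) ^ (r - 1) * (y - 1) := by
        nth_rewrite 1 [show r = (r - 1) + 1 by ring]
        rw [Real.rpow_add_one (by linarith) (r - 1)]
      have e3 : y ^ (r + 1 - 1) = y ^ (r - 1) * y := by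
        rw [show r + 1 - 1 = (r - 1) + 1 by ring]
        rw [Real.rpow_add_one hy0.ne' (r - 1)]
      rw [e1, e2, e3]
      have key : 2 * y ^ (r - 1) ≤ (y - 1) ^ (r - 1) + (y + 1) ^ (r - 1) :=
        my_sup2 (by linarith) hy1.le
      have heq : 1 * r * (y + 1) ^ (r - 1) * (r * y - 1) + (y + 1) ^ (r - 1) * (y + 1) * r +
          (1 * r * (y - 1) ^ (r - 1) * (r * y + 1) + (y - 1) ^ (r - 1) * (y - 1) * r) -
          2 * r * ((r + 1) * (y ^ (r - 1) * y))
          = r * (r + 1) * y * ((y + 1) ^ (r - 1) + (y - 1) ^ (r - 1) - 2 * y ^ (r - 1)) := by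
        ring
      rw [heq]
      apply mul_nonneg
      · apply mul_nonneg (mul_nonneg (by linarith) (by linarith)) hy0.le
      · linarith
  have hA1 : 0 ≤ A 1 := by
    have h4 : (4:ℝ) ≤ 2 ^ r := by
      have := Real.rpow_le_rpow_of_exponent_le one_le_two hr
      rw [Real.rpow_two] at this
      norm_num at this ⊢
      linarith
    have hval : A 1 = 2 ^ r * (r - 1) - 2 * r := by
      show (1 + 1:ℝ) ^ r * (r * 1 - 1) + ((1:ℝ) - 1) ^ r * (r * 1 + 1)
          - 2 * r * (1:ℝ) ^ (r + 1) = _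
      norm_num [Real.zero_rpow (show r ≠ 0 by linarith), Real.one_rpow]
    rw [hval]
    nlinarith
  have hle := hmono (show (1:ℝ) ∈ Ici (1:ℝ) by norm_num) (show x ∈ Ici (1:ℝ) from hx) hx
  have : (0:ℝ) ≤ A x := le_trans hA1 hle
  exact this

/-- the core inequality -/
lemma my_star {r x : ℝ} (hr : 2 ≤ r) (hx : 0 < x) :
    2 * r * x ^ (r + 1) ≤ (x + 1) ^ r * (r * x - 1) + |x - 1| ^ r * (r * x + 1) := by
  rcases le_total x 1 with h | h
  · have habs : |x - 1| = 1 - x := by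
      rw [abs_sub_comm, abs_of_nonneg (by linarith)]
    rw [habs]
    have := my_B_nonneg hr hx.le h
    rw [show (1:ℝ) + x = x + 1 by ring] at this
    linarith
  · have habs : |x - 1| = x - 1 := abs_of_nonneg (by linarith)
    rw [habs]
    have := my_A_nonneg hr h
    linarith
/-- the function whose convexity is the heart of the matter -/
def myPsi (h s : ℝ) : ℝ :=
  ((s + 2*Real.sqrt s + 1)^h + (s - 2*Real.sqrt s + 1)^h)/2 - s^h

def myg (h s : ℝ) : ℝ :=
  h/2 * ((s + 2*Real.sqrt s + 1)^(h-1) * (1 + 1/Real.sqrt s)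
       + (s - 2*Real.sqrt s + 1)^(h-1) * (1 - 1/Real.sqrt s)) - h * s^(h-1)

def myG (h s : ℝ) : ℝ :=
  h/2 * ((h-1) * (s + 2*Real.sqrt s + 1)^(h-2) * ((1 + 1/Real.sqrt s)*(1 + 1/Real.sqrt s))
       + (s + 2*Real.sqrt s + 1)^(h-1) * (-(1/(2*Real.sqrt s*s)))
       + ((h-1) * (s - 2*Real.sqrt s + 1)^(h-2) * ((1 - 1/Real.sqrt s)*(1 - 1/Real.sqrt s))
       + (s - 2*Real.sqrt s + 1)^(h-1) * (1/(2*Real.sqrt s*s))))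
    - h * ((h-1) * s^(h-2))

lemma my_psi_deriv1 {h s : ℝ} (hh : 2 ≤ h) (hs : 0 < s) :
    HasDerivAt (fun s => myPsi h s) (myg h s) s := by
  have hsp : 0 < Real.sqrt s := Real.sqrt_pos.2 hs
  have hne : Real.sqrt s ≠ 0 := hsp.ne'
  have hsq : HasDerivAt Real.sqrt (1/(2*Real.sqrt s)) s := Real.hasDerivAt_sqrt hs.ne'
  have hP : HasDerivAt (fun s : ℝ => s + 2*Real.sqrt s + 1) (1 + 2*(1/(2*Real.sqrt s))) s :=
    ((hasDerivAt_id s).add (hsq.const_mul 2)).add_const 1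
  have hQ : HasDerivAt (fun s : ℝ => s - 2*Real.sqrt s + 1) (1 - 2*(1/(2*Real.sqrt s))) s :=
    ((hasDerivAt_id s).sub (hsq.const_mul 2)).add_const 1
  have hPh : HasDerivAt (fun s : ℝ => (s + 2*Real.sqrt s + 1)^h)
      ((1 + 2*(1/(2*Real.sqrt s))) * h * (s + 2*Real.sqrt s + 1)^(h-1)) s :=
    hP.rpow_const (Or.inr (by linarith))
  have hQh : HasDerivAt (fun s : ℝ => (s - 2*Real.sqrt s + 1)^h)
      ((1 - 2*(1/(2*Real.sqrt s))) * h * (s - 2*Real.sqrt s + 1)^(h-1)) s :=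
    hQ.rpow_const (Or.inr (by linarith))
  have hsh : HasDerivAt (fun s : ℝ => s^h) (h * s^(h-1)) s :=
    Real.hasDerivAt_rpow_const (Or.inl hs.ne')
  have := ((hPh.add hQh).div_const 2).sub hsh
  refine this.congr_deriv ?_
  unfold myg
  field_simp

lemma my_psi_deriv2 {h s : ℝ} (hh : 2 ≤ h) (hs : 0 < s) :
    HasDerivAt (fun s => myg h s) (myG h s) s := by
  obtain ⟨x, hx0, rfl⟩ : ∃ x : ℝ, 0 < x ∧ x * x = s :=
    ⟨Real.sqrt s, Real.sqrt_pos.2 hs, Real.mul_self_sqrt hs.le⟩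
  set s : ℝ := x * x with hsdef
  have hsp : 0 < Real.sqrt s := Real.sqrt_pos.2 hs
  have hne : Real.sqrt s ≠ 0 := hsp.ne'
  have hsq : HasDerivAt Real.sqrt (1/(2*Real.sqrt s)) s := Real.hasDerivAt_sqrt hs.ne'
  have hP : HasDerivAt (fun s : ℝ => s + 2*Real.sqrt s + 1) (1 + 2*(1/(2*Real.sqrt s))) s :=
    ((hasDerivAt_id s).add (hsq.const_mul 2)).add_const 1
  have hQ : HasDerivAt (fun s : ℝ => s - 2*Real.sqrt s + 1) (1 - 2*(1/(2*Real.sqrt s))) s :=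
    ((hasDerivAt_id s).sub (hsq.const_mul 2)).add_const 1
  have hPh1 : HasDerivAt (fun s : ℝ => (s + 2*Real.sqrt s + 1)^(h-1))
      ((1 + 2*(1/(2*Real.sqrt s))) * (h-1) * (s + 2*Real.sqrt s + 1)^(h-1-1)) s :=
    hP.rpow_const (Or.inr (by linarith))
  have hQh1 : HasDerivAt (fun s : ℝ => (s - 2*Real.sqrt s + 1)^(h-1))
      ((1 - 2*(1/(2*Real.sqrt s))) * (h-1) * (s - 2*Real.sqrt s + 1)^(h-1-1)) s :=
    hQ.rpow_const (Or.inr (by linarith))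
  have hinv : HasDerivAt (fun s : ℝ => 1/Real.sqrt s) (-(1/(2*Real.sqrt s*s))) s := by
    have h0 := hsq.inv hne
    simp only [one_div]
    refine h0.congr_deriv ?_
    rw [Real.sq_sqrt hs.le]
    field_simp
  have h1p : HasDerivAt (fun s : ℝ => 1 + 1/Real.sqrt s) (-(1/(2*Real.sqrt s*s))) s :=
    hinv.const_add 1
  have h1m : HasDerivAt (fun s : ℝ => 1 - 1/Real.sqrt s) (1/(2*Real.sqrt s*s)) s := by
    simpa using hinv.const_sub 1
  have hsh1 : HasDerivAt (fun s : ℝ => s^(h-1)) ((h-1) * s^(h-1-1)) s :=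
    Real.hasDerivAt_rpow_const (Or.inl hs.ne')
  have := (((hPh1.mul h1p).add (hQh1.mul h1m)).const_mul (h/2)).sub (hsh1.const_mul h)
  refine this.congr_deriv ?_
  unfold myG
  rw [show h-1-1 = h-2 by ring, show Real.sqrt s = x from Real.sqrt_mul_self hx0.le]
  rw [hsdef]
  field_simp
lemma my_G_nonneg {h s : ℝ} (hh : 2 ≤ h) (hs : 0 < s) : 0 ≤ myG h s := by
  obtain ⟨x, hx0, rfl⟩ : ∃ x : ℝ, 0 < x ∧ x * x = s :=
    ⟨Real.sqrt s, Real.sqrt_pos.2 hs, Real.mul_self_sqrt hs.le⟩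
  unfold myG
  rw [show Real.sqrt (x*x) = x from Real.sqrt_mul_self hx0.le]
  have hx1 : (0:ℝ) < x + 1 := by linarith
  have e1 : (x*x + 2*x + 1)^(h-1) = (x+1)^(2*h-2) := by
    rw [show x*x + 2*x + 1 = (x+1)^(2:ℝ) by rw [Real.rpow_two]; ring]
    rw [← Real.rpow_mul hx1.le]
    norm_num [mul_sub]
  have e2 : (x*x + 2*x + 1)^(h-2) = (x+1)^(2*h-4) := by
    rw [show x*x + 2*x + 1 = (x+1)^(2:ℝ) by rw [Real.rpow_two]; ring]
    rw [← Real.rpow_mul hx1.le]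
    norm_num [mul_sub]
  have e3 : (x*x - 2*x + 1)^(h-1) = |x-1|^(2*h-2) := by
    rw [show x*x - 2*x + 1 = |x-1|^(2:ℝ) by rw [Real.rpow_two, sq_abs]; ring]
    rw [← Real.rpow_mul (abs_nonneg _)]
    norm_num [mul_sub]
  have e4 : (x*x - 2*x + 1)^(h-2) = |x-1|^(2*h-4) := by
    rw [show x*x - 2*x + 1 = |x-1|^(2:ℝ) by rw [Real.rpow_two, sq_abs]; ring]
    rw [← Real.rpow_mul (abs_nonneg _)]
    norm_num [mul_sub]
  have e5 : (x*x)^(h-2) = x^(2*h-4) := by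
    rw [show x*x = x^(2:ℝ) by rw [Real.rpow_two]; ring]
    rw [← Real.rpow_mul hx0.le]
    norm_num [mul_sub]
  have f1 : (x+1)^(2*h-4) * ((x+1)*(x+1)) = (x+1)^(2*h-2) := by
    rw [show 2*h-2 = (2*h-4) + 2 by ring, Real.rpow_add hx1, Real.rpow_two]
    ring
  have f2 : |x-1|^(2*h-4) * ((x-1)*(x-1)) = |x-1|^(2*h-2) := by
    rcases eq_or_ne x 1 with he | he
    · rw [he]
      simp [Real.zero_rpow (show 2*h-2 ≠ 0 by intro hc; nlinarith)]
    · have habs : 0 < |x-1| := abs_pos.2 (sub_ne_zero.2 he)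
      rw [show (x-1)*(x-1) = |x-1| * |x-1| from (abs_mul_abs_self (x-1)).symm,
        show 2*h-2 = (2*h-4) + 2 by ring, Real.rpow_add habs, Real.rpow_two]
      ring
  have f3 : x^(2*h-4) * (x*(x*x)) = x^(2*h-1) := by
    rw [show 2*h-1 = (2*h-4) + 3 by ring, Real.rpow_add hx0,
      show (3:ℝ) = ((3:ℕ):ℝ) by norm_num, Real.rpow_natCast]
    ring
  have hstar := my_star (r := 2*h-2) (x := x) (by linarith) hx0
  rw [show 2*h-2+1 = 2*h-1 by ring] at hstar
  rw [← f1, ← f2, ← f3] at hstar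
  rw [e1, e2, e3, e4, e5, ← f1, ← f2]
  set A4 := (x+1)^(2*h-4) with hA4
  set B4 := |x-1|^(2*h-4) with hB4
  set C4 := x^(2*h-4) with hC4
  have hA4n : 0 ≤ A4 := Real.rpow_nonneg hx1.le _
  have hB4n : 0 ≤ B4 := Real.rpow_nonneg (abs_nonneg _) _
  have hC4n : 0 ≤ C4 := Real.rpow_nonneg hx0.le _
  suffices hkey : 0 ≤ h/(4*(x*(x*x))) *
      ((A4 * ((x+1)*(x+1)) * ((2*h-2)*x - 1) + B4 * ((x-1)*(x-1)) * ((2*h-2)*x + 1))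
        - 2*(2*h-2) * (C4 * (x*(x*x)))) by
    convert hkey using 1
    field_simp
    ring
  apply mul_nonneg
  · apply div_nonneg (by linarith)
    positivity
  · linarith [hstar]

lemma my_psi_convex {h : ℝ} (hh : 2 ≤ h) :
    ConvexOn ℝ (Ici 0) (fun s => myPsi h s) := by
  have hcont : ContinuousOn (fun s => myPsi h s) (Ici 0) := by
    apply Continuous.continuousOn
    unfold myPsi
    have c1 : Continuous fun s : ℝ => (s + 2*Real.sqrt s + 1)^h :=
      ((continuous_id.add (continuous_const.mul Real.continuous_sqrt)).add
        continuous_const).rpow_const (fun x => Or.inr (by linarith))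
    have c2 : Continuous fun s : ℝ => (s - 2*Real.sqrt s + 1)^h :=
      ((continuous_id.sub (continuous_const.mul Real.continuous_sqrt)).add
        continuous_const).rpow_const (fun x => Or.inr (by linarith))
    have c3 : Continuous fun s : ℝ => s^h :=
      continuous_id.rpow_const (fun x => Or.inr (by linarith))
    fun_prop
  refine convexOn_of_hasDerivWithinAt2_nonneg (f' := fun s => myg h s)
    (f'' := fun s => myG h s) (convex_Ici 0) hcont ?_ ?_ ?_
  · rw [interior_Ici]
    intro s hs
    exact (my_psi_deriv1 hh hs).hasDerivWithinAt
  · rw [interior_Ici]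
    intro s hs
    exact (my_psi_deriv2 hh hs).hasDerivWithinAt
  · rw [interior_Ici]
    intro s hs
    exact my_G_nonneg hh hs
def myPhi (h c s : ℝ) : ℝ :=
  ((s + 2*c*Real.sqrt s + c^2)^h + (s - 2*c*Real.sqrt s + c^2)^h)/2 - s^h

lemma my_convexOn_congr {f g : ℝ → ℝ} (hf : ConvexOn ℝ (Ici 0) f)
    (hfg : ∀ x ∈ Ici (0:ℝ), f x = g x) : ConvexOn ℝ (Ici 0) g := by
  refine ⟨convex_Ici 0, fun x hx y hy a b ha hb hab => ?_⟩
  have hm : a • x + b • y ∈ Ici (0:ℝ) := (convex_Ici 0) hx hy ha hb hab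
  rw [← hfg _ hm, ← hfg _ hx, ← hfg _ hy]
  exact hf.2 hx hy ha hb hab

lemma my_convexOn_comp_mul {f : ℝ → ℝ} (hf : ConvexOn ℝ (Ici 0) f) {k : ℝ} (hk : 0 ≤ k) :
    ConvexOn ℝ (Ici 0) (fun s => f (k * s)) := by
  refine ⟨convex_Ici 0, fun x hx y hy a b ha hb hab => ?_⟩
  have hx' : (0:ℝ) ≤ x := hx
  have hy' : (0:ℝ) ≤ y := hy
  have h1 : k * x ∈ Ici (0:ℝ) := mul_nonneg hk hx'
  have h2 : k * y ∈ Ici (0:ℝ) := mul_nonneg hk hy'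
  have he : k * (a • x + b • y) = a • (k * x) + b • (k * y) := by
    simp only [smul_eq_mul]; ring
  show f (k * (a • x + b • y)) ≤ a • f (k * x) + b • f (k * y)
  rw [he]
  exact hf.2 h1 h2 ha hb hab

lemma my_phi_convex {h c : ℝ} (hh : 2 ≤ h) (hc : 0 ≤ c) :
    ConvexOn ℝ (Ici 0) (fun s => myPhi h c s) := by
  rcases hc.eq_or_lt with he | hcpos
  · -- c = 0
    have : (fun s => myPhi h c s) = fun _ => (0:ℝ) := by
      funext s
      unfold myPhi
      rw [← he]
      norm_num
    rw [this]
    exact convexOn_const 0 (convex_Ici 0)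
  · have hcne : c ≠ 0 := hcpos.ne'
    have base := my_psi_convex hh
    have comp := my_convexOn_comp_mul base (k := (1/c)*(1/c)) (by positivity)
    have hsmul := comp.smul (c := (c^2)^h) (Real.rpow_nonneg (by positivity) h)
    apply my_convexOn_congr hsmul
    intro s hs
    have hs' : (0:ℝ) ≤ s := hs
    simp only [Pi.smul_apply, smul_eq_mul]
    unfold myPsi myPhi
    have hsq : Real.sqrt ((1/c)*(1/c)*s) = (1/c) * Real.sqrt s := by
      rw [show (1/c)*(1/c)*s = ((1/c)*(1/c))*s by ring, Real.sqrt_mul (by positivity) s,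
        Real.sqrt_mul_self (by positivity)]
    rw [hsq]
    have hsqrt_nonneg : 0 ≤ Real.sqrt s := Real.sqrt_nonneg s
    have hsqs : Real.sqrt s ^ 2 = s := Real.sq_sqrt hs'
    have hin1 : (0:ℝ) ≤ (1/c)*(1/c)*s + 2*((1/c)*Real.sqrt s) + 1 := by positivity
    have hin2eq : (1/c)*(1/c)*s - 2*((1/c)*Real.sqrt s) + 1 = ((1/c)*Real.sqrt s - 1)^2 := by
      linear_combination (-((1/c)*(1/c))) * hsqs
    have hin2 : (0:ℝ) ≤ (1/c)*(1/c)*s - 2*((1/c)*Real.sqrt s) + 1 := by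
      rw [hin2eq]; positivity
    have expand : ∀ p q r : ℝ, (c^2)^h * ((p + q)/2 - r)
        = ((c^2)^h * p + (c^2)^h * q)/2 - (c^2)^h * r := by intro p q r; ring
    rw [expand]
    have m1 : (c^2)^h * ((1/c)*(1/c)*s + 2*((1/c)*Real.sqrt s) + 1)^h
        = (s + 2*c*Real.sqrt s + c^2)^h := by
      rw [← Real.mul_rpow (by positivity) hin1]
      congr 1
      field_simp
    have m2 : (c^2)^h * ((1/c)*(1/c)*s - 2*((1/c)*Real.sqrt s) + 1)^h
        = (s - 2*c*Real.sqrt s + c^2)^h := by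
      rw [← Real.mul_rpow (by positivity) hin2]
      congr 1
      field_simp
    have m3 : (c^2)^h * ((1/c)*(1/c)*s)^h = s^h := by
      rw [← Real.mul_rpow (by positivity) (by positivity)]
      congr 1
      field_simp
    rw [m1, m2, m3]

lemma my_abs_pair (t u v : ℝ) :
    |u + v|^t + |u - v|^t = (|u| + |v|)^t + |(|u| - |v|)|^t := by
  rcases le_total 0 u with hu | hu <;> rcases le_total 0 v with hv | hv
  · rw [abs_of_nonneg hu, abs_of_nonneg hv, abs_of_nonneg (show (0:ℝ) ≤ u + v by linarith)]
    try ring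
  · rw [abs_of_nonneg hu, abs_of_nonpos hv,
      abs_of_nonneg (show (0:ℝ) ≤ u - v by linarith), sub_neg_eq_add,
      show u + -v = u - v by ring]
    try ring
  · rw [abs_of_nonpos hu, abs_of_nonneg hv,
      abs_of_nonpos (show u - v ≤ 0 by linarith), show -u - v = -(u + v) by ring, abs_neg,
      show -(u - v) = -u + v by ring]
    try ring
  · rw [abs_of_nonpos hu, abs_of_nonpos hv,
      abs_of_nonpos (show u + v ≤ 0 by linarith), show -u - -v = -(u - v) by ring, abs_neg,
      show -(u + v) = -u + -v by ring]
    try ring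

lemma my_phi_sq {h c : ℝ} (hc : 0 ≤ c) (x : ℝ) :
    myPhi h c (x^2) = ((|x| + c)^(2*h) + |(|x| - c)|^(2*h))/2 - |x|^(2*h) := by
  unfold myPhi
  rw [Real.sqrt_sq_eq_abs]
  have g1 : x^2 + 2*c*|x| + c^2 = (|x| + c)^(2:ℝ) := by
    rw [Real.rpow_two, ← sq_abs x]; ring
  have g2 : x^2 - 2*c*|x| + c^2 = |(|x| - c)|^(2:ℝ) := by
    rw [Real.rpow_two, sq_abs, ← sq_abs x]; ring
  have g3 : (x^2 : ℝ) = |x|^(2:ℝ) := by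
    rw [Real.rpow_two, sq_abs]
  rw [g1, g2, g3, ← Real.rpow_mul (add_nonneg (abs_nonneg x) hc), ← Real.rpow_mul (abs_nonneg _),
    ← Real.rpow_mul (abs_nonneg _)]
lemma my_rademacher {Ω' : Type} [MeasurableSpace Ω'] (μ' : Measure Ω') [IsProbabilityMeasure μ']
    (U : Ω' → ℝ) (hUmeas : Measurable U)
    (hU1 : μ' {ω | U ω = 1} = 1 / 2) (hU2 : μ' {ω | U ω = -1} = 1 / 2)
    (f : ℝ → ℝ) (hf : Continuous f) :
    ∫ ω, f (U ω) ∂μ' = (f 1 + f (-1))/2 := by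
  set A : Set Ω' := U ⁻¹' {1} with hA
  set B : Set Ω' := U ⁻¹' {-1} with hB
  have hAmeas : MeasurableSet A := hUmeas (measurableSet_singleton 1)
  have hBmeas : MeasurableSet B := hUmeas (measurableSet_singleton (-1))
  have hAval : μ' A = 1/2 := hU1
  have hBval : μ' B = 1/2 := hU2
  have hdisj : Disjoint A B := by
    rw [Set.disjoint_left]
    intro ω hωA hωB
    have h1 : U ω = 1 := hωA
    have h2 : U ω = -1 := hωB
    rw [h1] at h2
    norm_num at h2
  have hABval : μ' (A ∪ B) = 1 := by
    rw [measure_union hdisj hBmeas, hAval, hBval, ENNReal.add_halves]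
  have hcompl : μ' (A ∪ B)ᶜ = 0 := by
    rw [measure_compl (hAmeas.union hBmeas) (measure_ne_top _ _), hABval, measure_univ,
      tsub_self]
  have hint : Integrable (fun ω => f (U ω)) μ' := by
    apply Integrable.mono' (integrable_const (|f 1| + |f (-1)|))
      ((hf.measurable.comp hUmeas).aestronglyMeasurable)
    rw [Filter.eventually_iff]
    apply Filter.mem_of_superset (MeasureTheory.compl_mem_ae_iff.2 hcompl)
    intro ω hω
    simp only [Set.mem_setOf_eq, Function.comp_apply]
    rcases (Set.notMem_compl_iff.1 fun hc => hω hc : ω ∈ A ∪ B) with hωA | hωB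
    · have hU : U ω = 1 := hωA
      rw [Real.norm_eq_abs, hU]
      have := abs_nonneg (f (-1))
      linarith
    · have hU : U ω = -1 := hωB
      rw [Real.norm_eq_abs, hU]
      have := abs_nonneg (f 1)
      linarith
  have hsplit : ∫ ω, f (U ω) ∂μ' = (∫ ω in A ∪ B, f (U ω) ∂μ') + ∫ ω in (A ∪ B)ᶜ, f (U ω) ∂μ' :=
    (integral_add_compl (hAmeas.union hBmeas) hint).symm
  have hzero : ∫ ω in (A ∪ B)ᶜ, f (U ω) ∂μ' = 0 := by
    rw [Measure.restrict_eq_zero.2 hcompl, integral_zero_measure]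
  have hunion : ∫ ω in A ∪ B, f (U ω) ∂μ'
      = (∫ ω in A, f (U ω) ∂μ') + ∫ ω in B, f (U ω) ∂μ' :=
    setIntegral_union hdisj hBmeas hint.integrableOn hint.integrableOn
  have hAint : ∫ ω in A, f (U ω) ∂μ' = (1/2 : ℝ) * f 1 := by
    rw [setIntegral_congr_fun hAmeas (g := fun _ => f 1) (fun ω hω => by
      have : U ω = 1 := hω
      simp [this]), setIntegral_const, measureReal_def, hAval]
    rw [smul_eq_mul]
    norm_num
  have hBint : ∫ ω in B, f (U ω) ∂μ' = (1/2 : ℝ) * f (-1) := by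
    rw [setIntegral_congr_fun hBmeas (g := fun _ => f (-1)) (fun ω hω => by
      have : U ω = -1 := hω
      simp [this]), setIntegral_const, measureReal_def, hBval]
    rw [smul_eq_mul]
    norm_num
  rw [hsplit, hzero, hunion, hAint, hBint]
  ring
lemma my_integ_bound {t : ℝ} (ht : 2 ≤ t) {Ω : Type} [MeasurableSpace Ω] {μ : Measure Ω}
    [IsProbabilityMeasure μ] {X : Ω → ℝ} (hXmeas : Measurable X)
    (hXint : Integrable (fun ω => |X ω| ^ t) μ) (d e : ℝ) :
    Integrable (fun ω => |d * X ω + e| ^ t) μ := by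
  have hcont : Continuous fun y : ℝ => |d * y + e| ^ t :=
    (((continuous_const.mul continuous_id).add continuous_const).abs).rpow_const
      (fun x => Or.inr (by linarith))
  apply Integrable.mono' ((hXint.const_mul (2^t * |d|^t)).add (integrable_const (2^t * |e|^t)))
    ((hcont.measurable.comp hXmeas).aestronglyMeasurable)
  apply Filter.Eventually.of_forall
  intro ω
  simp only [Function.comp_apply, Pi.add_apply]
  rw [Real.norm_eq_abs, abs_of_nonneg (Real.rpow_nonneg (abs_nonneg _) t)]
  set M := max (|d| * |X ω|) |e| with hMdef
  have hM0 : 0 ≤ M := (abs_nonneg e).trans (le_max_right _ _)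
  have hb : |d * X ω + e| ≤ 2 * M := by
    have h1 := abs_add_le (d * X ω) e
    rw [abs_mul] at h1
    have h2 := le_max_left (|d| * |X ω|) |e|
    have h3 := le_max_right (|d| * |X ω|) |e|
    rw [← hMdef] at h2 h3
    linarith
  have hMt : M ^ t ≤ |d|^t * |X ω|^t + |e|^t := by
    rcases max_cases (|d| * |X ω|) |e| with ⟨hMeq, _⟩ | ⟨hMeq, _⟩
    · rw [hMdef, hMeq, Real.mul_rpow (abs_nonneg d) (abs_nonneg _)]
      have := Real.rpow_nonneg (abs_nonneg e) t
      linarith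
    · rw [hMdef, hMeq]
      have h4 : (0:ℝ) ≤ |d|^t * |X ω|^t :=
        mul_nonneg (Real.rpow_nonneg (abs_nonneg d) t) (Real.rpow_nonneg (abs_nonneg _) t)
      linarith
  have hstep : |d * X ω + e| ^ t ≤ 2^t * M^t := by
    calc |d * X ω + e| ^ t ≤ (2 * M) ^ t :=
          Real.rpow_le_rpow (abs_nonneg _) hb (by linarith)
      _ = 2^t * M^t := Real.mul_rpow (by norm_num) hM0
  have h2t : (0:ℝ) ≤ 2^t := Real.rpow_nonneg (by norm_num) t
  have := mul_le_mul_of_nonneg_left hMt h2t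
  calc |d * X ω + e| ^ t ≤ 2^t * M^t := hstep
    _ ≤ 2^t * (|d|^t * |X ω|^t + |e|^t) := this
    _ = 2^t * |d|^t * |X ω|^t + 2^t * |e|^t := by ring

lemma my_integ_sq {t : ℝ} (ht : 2 ≤ t) {Ω : Type} [MeasurableSpace Ω] {μ : Measure Ω}
    [IsProbabilityMeasure μ] {X : Ω → ℝ} (hXmeas : Measurable X)
    (hXint : Integrable (fun ω => |X ω| ^ t) μ) :
    Integrable (fun ω => (X ω) ^ 2) μ := by
  apply Integrable.mono' ((integrable_const 1).add hXint)
    (((continuous_pow 2).measurable.comp hXmeas).aestronglyMeasurable)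
  apply Filter.Eventually.of_forall
  intro ω
  simp only [Function.comp_apply, Pi.add_apply]
  rw [Real.norm_eq_abs, abs_of_nonneg (sq_nonneg _)]
  have habs : (X ω)^2 = |X ω| ^ (2:ℝ) := by
    rw [Real.rpow_two, sq_abs]
  rcases le_total (|X ω|) 1 with hx | hx
  · have h1 : (X ω)^2 ≤ 1 := by
      rw [← sq_abs]
      nlinarith [abs_nonneg (X ω)]
    have h2 : (0:ℝ) ≤ |X ω| ^ t := Real.rpow_nonneg (abs_nonneg _) t
    linarith
  · have h1 : |X ω| ^ (2:ℝ) ≤ |X ω| ^ t :=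
      Real.rpow_le_rpow_of_exponent_le hx ht
    rw [habs]
    linarith

lemma my_symm_integral {t : ℝ} (ht : 0 ≤ t) {Ω : Type} [MeasurableSpace Ω] {μ : Measure Ω}
    [IsProbabilityMeasure μ] {X : Ω → ℝ} (hXmeas : Measurable X)
    (hXsymm : μ.map X = μ.map (fun ω => -X ω)) (d e : ℝ) :
    ∫ ω, |d * X ω + e| ^ t ∂μ = ∫ ω, |d * X ω - e| ^ t ∂μ := by
  have hcont : Continuous fun y : ℝ => |d * y + e| ^ t :=
    (((continuous_const.mul continuous_id).add continuous_const).abs).rpow_const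
      (fun x => Or.inr (by linarith))
  calc ∫ ω, |d * X ω + e| ^ t ∂μ
      = ∫ y, |d * y + e| ^ t ∂(μ.map X) :=
        (integral_map hXmeas.aemeasurable hcont.aestronglyMeasurable).symm
    _ = ∫ y, |d * y + e| ^ t ∂(μ.map (fun ω => -X ω)) := by rw [hXsymm]
    _ = ∫ ω, |d * (-X ω) + e| ^ t ∂μ :=
        integral_map hXmeas.neg.aemeasurable hcont.aestronglyMeasurable
    _ = ∫ ω, |d * X ω - e| ^ t ∂μ := by
        congr 1
        funext ω
        rw [show d * (-X ω) + e = -(d * X ω - e) by ring, abs_neg]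

lemma my_phi_continuous {h c : ℝ} (hh : 0 ≤ h) : Continuous (fun s => myPhi h c s) := by
  unfold myPhi
  have c1 : Continuous fun s : ℝ => (s + 2*c*Real.sqrt s + c^2)^h :=
    ((continuous_id.add (continuous_const.mul Real.continuous_sqrt)).add
      continuous_const).rpow_const (fun x => Or.inr hh)
  have c2 : Continuous fun s : ℝ => (s - 2*c*Real.sqrt s + c^2)^h :=
    ((continuous_id.sub (continuous_const.mul Real.continuous_sqrt)).add
      continuous_const).rpow_const (fun x => Or.inr hh)
  have c3 : Continuous fun s : ℝ => s^h :=
    continuous_id.rpow_const (fun x => Or.inr hh)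
  fun_prop



theorem moment_ineq_symm_rademacher_t_ge_four
    (t : ℝ) (ht : 4 ≤ t)
    (z₁ z₂ : ℝ) (hz₁ : 0 ≤ z₁)
    (a b : ℝ) (ha : 0 ≤ a) (hb : 0 ≤ b) (hab : a ^ t ≤ b)
    -- a symmetric random variable `X` with `E X^2 = a^2` and `E|X|^t = b`
    (Ω : Type) [MeasurableSpace Ω] (μ : Measure Ω) [IsProbabilityMeasure μ]
    (X : Ω → ℝ) (hXmeas : Measurable X)
    (hXsymm : μ.map X = μ.map (fun ω => -X ω))
    (hXint : Integrable (fun ω => |X ω| ^ t) μ)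
    (hX2 : ∫ ω, (X ω) ^ 2 ∂μ = a ^ 2)
    (hXt : ∫ ω, |X ω| ^ t ∂μ = b)
    -- a Rademacher random variable `U`
    (Ω' : Type) [MeasurableSpace Ω'] (μ' : Measure Ω') [IsProbabilityMeasure μ']
    (U : Ω' → ℝ) (hUmeas : Measurable U)
    (hU1 : μ' {ω | U ω = 1} = 1 / 2) (hU2 : μ' {ω | U ω = -1} = 1 / 2) :
    (∫ ω, |a * z₁ * U ω + z₂| ^ t ∂μ') - a ^ t * z₁ ^ t
      ≤ (∫ ω, |z₁ * X ω + z₂| ^ t ∂μ) - b * z₁ ^ t := by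

  have ht2 : (2:ℝ) ≤ t := by linarith
  have ht0 : (0:ℝ) ≤ t := by linarith
  have hh : 2 ≤ t/2 := by linarith
  have h2t : 2 * (t/2) = t := by ring
  -- pointwise identity
  have pt : ∀ x : ℝ, myPhi (t/2) |z₂| (z₁^2 * x^2)
      = (|z₁*x + z₂|^t + |z₁*x - z₂|^t)/2 - z₁^t * |x|^t := by
    intro x
    rw [show z₁^2 * x^2 = (z₁*x)^2 by ring, my_phi_sq (abs_nonneg z₂) (z₁*x), h2t,
      ← my_abs_pair t (z₁*x) z₂, abs_mul, abs_of_nonneg hz₁,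
      Real.mul_rpow hz₁ (abs_nonneg x)]
  -- integrability
  have I1 : Integrable (fun ω => |z₁ * X ω + z₂|^t) μ := my_integ_bound ht2 hXmeas hXint z₁ z₂
  have I2 : Integrable (fun ω => |z₁ * X ω - z₂|^t) μ := by
    have := my_integ_bound ht2 hXmeas hXint z₁ (-z₂)
    simpa [← sub_eq_add_neg] using this
  have Isq : Integrable (fun ω => (X ω)^2) μ := my_integ_sq ht2 hXmeas hXint
  have Isq' : Integrable (fun ω => z₁^2 * (X ω)^2) μ := Isq.const_mul _
  have hptfun : (fun ω => myPhi (t/2) |z₂| (z₁^2 * (X ω)^2))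
      = fun ω => (|z₁*X ω + z₂|^t + |z₁*X ω - z₂|^t)/2 - z₁^t * |X ω|^t :=
    funext fun ω => pt (X ω)
  have Iphi : Integrable (fun ω => myPhi (t/2) |z₂| (z₁^2 * (X ω)^2)) μ := by
    rw [hptfun]
    exact ((I1.add I2).div_const 2).sub (hXint.const_mul _)
  -- Jensen
  have hconv := my_phi_convex hh (abs_nonneg z₂)
  have hfs : ∀ᵐ ω ∂μ, z₁^2*(X ω)^2 ∈ Ici (0:ℝ) :=
    Filter.Eventually.of_forall (fun ω => by simp only [Set.mem_Ici]; positivity)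
  have hgi : Integrable ((fun s => myPhi (t/2) |z₂| s) ∘ (fun ω => z₁^2*(X ω)^2)) μ := Iphi
  have hJ := hconv.map_integral_le ((my_phi_continuous (by linarith)).continuousOn)
    isClosed_Ici hfs Isq' hgi
  have hmean : ∫ ω, z₁^2*(X ω)^2 ∂μ = z₁^2*a^2 := by
    rw [integral_const_mul, hX2]
  rw [hmean] at hJ
  -- compute the integral of phi
  have hsym : ∫ ω, |z₁*X ω - z₂|^t ∂μ = ∫ ω, |z₁*X ω + z₂|^t ∂μ :=
    (my_symm_integral ht0 hXmeas hXsymm z₁ z₂).symm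
  have hRHS : ∫ ω, myPhi (t/2) |z₂| (z₁^2*(X ω)^2) ∂μ
      = (∫ ω, |z₁*X ω + z₂|^t ∂μ) - z₁^t * b := by
    rw [hptfun]
    have Ihalf : Integrable (fun ω => (|z₁ * X ω + z₂| ^ t + |z₁ * X ω - z₂| ^ t) / 2) μ :=
      (I1.add I2).div_const 2
    have Imul : Integrable (fun ω => z₁ ^ t * |X ω| ^ t) μ := hXint.const_mul _
    rw [integral_sub Ihalf Imul, integral_div, integral_add I1 I2, integral_const_mul,
      hsym, hXt]
    ring
  -- the value of phi at the mean
  have hval : myPhi (t/2) |z₂| (z₁^2*a^2)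
      = (|a*z₁+z₂|^t + |a*z₁-z₂|^t)/2 - z₁^t*a^t := by
    have hp := pt a
    rw [show z₁^2*a^2 = z₁^2*a^2 by ring] at hp
    rw [hp, abs_of_nonneg ha, show z₁*a = a*z₁ from mul_comm _ _]
  -- Rademacher side
  have hRad : ∫ ω, |a*z₁*U ω + z₂|^t ∂μ' = (|a*z₁+z₂|^t + |a*z₁-z₂|^t)/2 := by
    have hfc : Continuous fun y : ℝ => |a*z₁*y + z₂|^t :=
      (((continuous_const.mul continuous_id).add continuous_const).abs).rpow_const
        (fun x => Or.inr ht0)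
    rw [my_rademacher μ' U hUmeas hU1 hU2 (fun y => |a*z₁*y + z₂|^t) hfc]
    rw [show a*z₁*(1:ℝ) + z₂ = a*z₁+z₂ by ring,
      show a*z₁*(-1:ℝ) + z₂ = -(a*z₁ - z₂) by ring, abs_neg]
  rw [hRad]
  rw [hRHS, hval] at hJ
  have hz₁t : (0:ℝ) ≤ z₁^t := Real.rpow_nonneg hz₁ t
  have hcomm1 : a^t * z₁^t = z₁^t * a^t := mul_comm _ _
  have hcomm2 : b * z₁^t = z₁^t * b := mul_comm _ _
  linarith
end
end
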